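/- arXiv:2204.09428 — 8 statements merged into one kernel-verified Lean document; each statement's English description precedes it below -/
import Mathlib

section
/- For every function w : [−1,1] → ℝ that is square integrable, weakly differentiable, and satisfies ∫_{−1}^{1} (1−x²)|w'(x)|² dx < ∞, one has ∫_{−1}^{1} |w(x) − w̄|² dx ≤ (1/2) ∫_{−1}^{1} (1−x²)|w'(x)|² dx, where w̄ = (1/2) ∫_{−1}^{1} w(x) dx. -/
open MeasureTheory Set


lemma stmt2_phi_deriv (g G : ℝ → ℝ) (x : ℝ) (hp : (1:ℝ) - x^2 ≠ 0)
    (hGd : HasDerivAt G (g x) x) :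
    HasDerivAt (fun y : ℝ => 2*y/(1-y^2) * (G y)^2)
      (2*((G x)^2/(1-x^2)) + ((1-x^2)*((g x * (1-x^2) + 2*x*G x)/(1-x^2)^2))^2 - g x^2) x := by
  have hc1 : HasDerivAt (fun y : ℝ => 2*y) 2 x := by
    simpa using (hasDerivAt_id x).const_mul (2:ℝ)
  have hc2 : HasDerivAt (fun y : ℝ => 1 - y^2) (-(2*x)) x := by
    simpa using (hasDerivAt_pow 2 x).const_sub (1:ℝ)
  have h1 := hc1.fun_div hc2 hp
  have h2 : HasDerivAt (fun y => (G y)^2) (2*G x*g x) x := by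
    simpa using hGd.fun_pow 2
  have h3 := h1.fun_mul h2
  refine h3.congr_deriv ?_
  field_simp
  ring

set_option maxHeartbeats 2000000 in
lemma stmt2_key (w g G : ℝ → ℝ) (c M A : ℝ) (e : ℝ) (he0 : 0 < e) (he1 : e ≤ 1)
    (hgdef : g = fun x => w x - c)
    (hwd : ∀ x ∈ Set.Ioo (-1:ℝ) 1, HasDerivAt w (deriv w x) x)
    (hGd : ∀ x ∈ Set.Ioo (-1:ℝ) 1, HasDerivAt G (g x) x)
    (hgc : ContinuousOn g (Set.Icc (-1:ℝ) 1))
    (hM : ∀ x ∈ Set.Icc (-1:ℝ) 1, ‖g x‖ ≤ M)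
    (hM0 : 0 ≤ M)
    (hGa : ∀ x ∈ Set.Icc (-1:ℝ) 1, |G x| ≤ M * (1 + x))
    (hGb : ∀ x ∈ Set.Icc (-1:ℝ) 1, |G x| ≤ M * (1 - x))
    (hw'Ioo : IntegrableOn (fun x => (1-x^2)*(deriv w x)^2) (Set.Ioo (-1:ℝ) 1))
    (hA : A = ∫ x in Set.Ioo (-1:ℝ) 1, (1-x^2)*(deriv w x)^2) :
    (∫ x in Set.Ioc (-1+e) (1-e), g x ^ 2) ≤ 8*M^2*e + A/2 := by
  set a : ℝ := -1 + e with ha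
  set b : ℝ := 1 - e with hb
  have hab : a ≤ b := by rw [ha, hb]; linarith
  have ha1 : -1 < a := by rw [ha]; linarith
  have ha0 : a ≤ 0 := by rw [ha]; linarith
  have hb0 : 0 ≤ b := by rw [hb]; linarith
  have hb1 : b < 1 := by rw [hb]; linarith
  have hsub : Set.Icc a b ⊆ Set.Ioo (-1:ℝ) 1 :=
    fun x hx => ⟨lt_of_lt_of_le ha1 hx.1, lt_of_le_of_lt hx.2 hb1⟩
  have hsubI : Set.Icc a b ⊆ Set.Icc (-1:ℝ) 1 := hsub.trans Set.Ioo_subset_Icc_self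
  have huIcc : Set.uIcc a b = Set.Icc a b := Set.uIcc_of_le hab
  have hx2pos : ∀ x ∈ Set.Icc a b, 0 < 1 - x^2 := by
    intro x hx
    have h1 := hsub hx
    nlinarith [h1.1, h1.2]
  -- continuity on [a,b]
  have hgci : ContinuousOn g (Set.Icc a b) := hgc.mono hsubI
  have hGci : ContinuousOn G (Set.Icc a b) :=
    fun x hx => (hGd x (hsub hx)).continuousAt.continuousWithinAt
  have honec : ContinuousOn (fun x : ℝ => 1 - x^2) (Set.Icc a b) := by fun_prop
  have hone_ne : ∀ x ∈ Set.Icc a b, (1:ℝ) - x^2 ≠ 0 := fun x hx => ne_of_gt (hx2pos x hx)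
  -- integrability of the weighted derivative on a..b
  have hw2int : IntervalIntegrable (fun x => (1-x^2)*(deriv w x)^2) volume a b := by
    refine (hw'Ioo.mono_set ?_).intervalIntegrable
    rw [huIcc]; exact hsub
  -- integrability of deriv w on a..b
  have hdmeas : AEStronglyMeasurable (deriv w) (volume.restrict (Set.Icc a b)) :=
    (measurable_deriv w).aestronglyMeasurable
  set dlt : ℝ := 1 - b^2 with hdlt
  have hdlt0 : 0 < dlt := hx2pos b ⟨hab, le_refl b⟩
  have hlower : ∀ x ∈ Set.Icc a b, dlt ≤ 1 - x^2 := by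
    intro x hx
    have hxa : -b ≤ x := by rw [ha] at hx; rw [hb]; linarith [hx.1]
    have hxb : x ≤ b := hx.2
    rw [hdlt]; nlinarith
  have hderiv_int : IntervalIntegrable (deriv w) volume a b := by
    rw [intervalIntegrable_iff_integrableOn_Icc_of_le hab]
    have hbint : IntegrableOn (fun x => (1 + (1/dlt)*((1-x^2)*(deriv w x)^2))/2) (Set.Icc a b) := by
      refine Integrable.div_const ?_ 2
      refine (integrableOn_const ?_).add (((hw'Ioo.mono_set (hsub)).const_mul (1/dlt)))
      simp [Real.volume_Icc]
    refine hbint.mono' hdmeas ?_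
    refine (ae_restrict_iff' measurableSet_Icc).2 (ae_of_all _ fun x hx => ?_)
    have h1 : dlt * (deriv w x)^2 ≤ (1-x^2)*(deriv w x)^2 :=
      mul_le_mul_of_nonneg_right (hlower x hx) (sq_nonneg _)
    rw [Real.norm_eq_abs]
    have h2 : (deriv w x)^2 ≤ 1/dlt * ((1-x^2)*(deriv w x)^2) := by
      rw [one_div, inv_mul_eq_div, le_div_iff₀ hdlt0]
      nlinarith [h1]
    rcases abs_cases (deriv w x) with ⟨h, _⟩ | ⟨h, _⟩ <;> rw [h] <;>
      nlinarith [sq_nonneg (deriv w x - 1), sq_nonneg (deriv w x + 1), h2]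
  -- G * deriv w integrable
  have habIoc : Set.Ioc a b ⊆ Set.Icc a b := Set.Ioc_subset_Icc_self
  have hGbdd : ∀ x ∈ Set.Icc a b, |G x| ≤ 2*M := by
    intro x hx
    have := hGa x (hsubI hx)
    have hx1 : x ≤ 1 := (hsubI hx).2
    nlinarith
  have hGW : IntervalIntegrable (fun x => G x * deriv w x) volume a b := by
    rw [intervalIntegrable_iff_integrableOn_Icc_of_le hab]
    have hbint : IntegrableOn (fun x => 2*M*|deriv w x|) (Set.Icc a b) := by
      have := (intervalIntegrable_iff_integrableOn_Icc_of_le hab).1 hderiv_int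
      exact (this.abs).const_mul (2*M)
    refine hbint.mono' ?_ ?_
    · exact ((hGci.aestronglyMeasurable measurableSet_Icc).mul hdmeas)
    · refine (ae_restrict_iff' measurableSet_Icc).2 (ae_of_all _ fun x hx => ?_)
      rw [Real.norm_eq_abs, abs_mul]
      exact mul_le_mul_of_nonneg_right (hGbdd x hx) (abs_nonneg _)
  -- integration by parts
  have hIBP : ∫ x in a..b, G x * deriv w x
      = G b * g b - G a * g a - ∫ x in a..b, g x * g x := by
    refine intervalIntegral.integral_mul_deriv_eq_deriv_mul ?_ ?_ ?_ ?_
    · intro x hx; rw [huIcc] at hx; exact hGd x (hsub hx)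
    · intro x hx; rw [huIcc] at hx
      rw [hgdef]; exact (hwd x (hsub hx)).sub_const c
    · exact ContinuousOn.intervalIntegrable (by rw [huIcc]; exact hgci)
    · exact hderiv_int
  -- quad integrable
  have hGsqint : IntervalIntegrable (fun x => (G x)^2/(1-x^2)) volume a b :=
    ContinuousOn.intervalIntegrable (by rw [huIcc]; exact (hGci.pow 2).div honec hone_ne)
  have hquadint : IntervalIntegrable
      (fun x => (1/4)*((1-x^2)*(deriv w x)^2) + (G x)^2/(1-x^2)) volume a b :=
    (hw2int.const_mul (1/4)).add hGsqint
  -- pointwise AM-GM and integral bound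
  have hmono : ∫ x in a..b, -(G x * deriv w x)
      ≤ ∫ x in a..b, ((1/4)*((1-x^2)*(deriv w x)^2) + (G x)^2/(1-x^2)) := by
    refine intervalIntegral.integral_mono_on hab hGW.neg hquadint ?_
    intro x hx
    have hp := hx2pos x hx
    have hkey : -(G x * deriv w x) - (1/4)*((1-x^2)*(deriv w x)^2) ≤ (G x)^2/(1-x^2) := by
      rw [le_div_iff₀ hp]
      nlinarith [sq_nonneg (G x + (1-x^2)*(deriv w x)/2)]
    linarith
  have hsplit : ∫ x in a..b, ((1/4)*((1-x^2)*(deriv w x)^2) + (G x)^2/(1-x^2))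
      = (1/4)*(∫ x in a..b, (1-x^2)*(deriv w x)^2) + ∫ x in a..b, (G x)^2/(1-x^2) := by
    rw [intervalIntegral.integral_add (hw2int.const_mul (1/4)) hGsqint,
      intervalIntegral.integral_const_mul]
  -- An ≤ A
  have hAn : ∫ x in a..b, (1-x^2)*(deriv w x)^2 ≤ A := by
    rw [intervalIntegral.integral_of_le hab, hA]
    refine setIntegral_mono_set hw'Ioo ?_ ?_
    · refine (ae_restrict_iff' measurableSet_Ioo).2 (ae_of_all _ fun x hx => ?_)
      exact mul_nonneg (by nlinarith [hx.1, hx.2]) (sq_nonneg _)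
    · exact HasSubset.Subset.eventuallyLE (fun x hx =>
        ⟨lt_of_lt_of_le ha1 (le_of_lt hx.1), lt_of_le_of_lt hx.2 hb1⟩)
  -- boundary bounds
  have haI : a ∈ Set.Icc (-1:ℝ) 1 := hsubI ⟨le_refl a, hab⟩
  have hbI : b ∈ Set.Icc (-1:ℝ) 1 := hsubI ⟨hab, le_refl b⟩
  have hbd1 : G b * g b ≤ M^2 * e := by
    have h1 := hGb b hbI
    have h2 := hM b hbI
    rw [Real.norm_eq_abs] at h2
    have hbe : 1 - b = e := by rw [hb]; ring
    calc G b * g b ≤ |G b * g b| := le_abs_self _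
      _ = |G b| * |g b| := abs_mul _ _
      _ ≤ (M * (1-b)) * M := by
          exact mul_le_mul h1 h2 (abs_nonneg _) (mul_nonneg hM0 (by linarith [hbI.2]))
      _ = M^2 * e := by rw [← hbe]; ring
  have hbd2 : -(G a * g a) ≤ M^2 * e := by
    have h1 := hGa a haI
    have h2 := hM a haI
    rw [Real.norm_eq_abs] at h2
    have hae : 1 + a = e := by rw [ha]; ring
    calc -(G a * g a) ≤ |G a * g a| := neg_le_abs _
      _ = |G a| * |g a| := abs_mul _ _
      _ ≤ (M * (1+a)) * M := by
          exact mul_le_mul h1 h2 (abs_nonneg _) (mul_nonneg hM0 (by linarith [haI.1]))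
      _ = M^2 * e := by rw [← hae]; ring
  -- first main inequality
  have hgg : ∫ x in a..b, g x * g x = ∫ x in a..b, g x ^ 2 := by
    refine intervalIntegral.integral_congr fun x _ => ?_
    ring
  have hmain : (∫ x in a..b, g x ^ 2)
      ≤ 2*M^2*e + A/4 + ∫ x in a..b, (G x)^2/(1-x^2) := by
    have h0 : (∫ x in a..b, g x ^ 2)
        = G b * g b - G a * g a - ∫ x in a..b, G x * deriv w x := by
      rw [← hgg]; linarith [hIBP]
    have h1 : - ∫ x in a..b, G x * deriv w x = ∫ x in a..b, -(G x * deriv w x) := by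
      rw [intervalIntegral.integral_neg]
    rw [h0]
    have h2 := hmono
    rw [← h1, hsplit] at h2
    linarith [hAn, hbd1, hbd2]
  -- Hardy part
  set U : ℝ → ℝ := fun x => (g x * (1-x^2) + 2*x*G x)/(1-x^2)^2 with hU
  set φ : ℝ → ℝ := fun y => 2*y/(1-y^2) * (G y)^2 with hφ
  set ψ : ℝ → ℝ := fun x => 2*((G x)^2/(1-x^2)) + ((1-x^2)*U x)^2 - g x^2 with hψ
  have hφd : ∀ x ∈ Set.Icc a b, HasDerivAt φ (ψ x) x := by
    intro x hx
    simp only [hφ, hψ, hU]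
    exact stmt2_phi_deriv g G x (hone_ne x hx) (hGd x (hsub hx))
  have hUc : ContinuousOn U (Set.Icc a b) := by
    refine ContinuousOn.div ?_ (honec.pow 2) (fun x hx => pow_ne_zero 2 (hone_ne x hx))
    exact (hgci.mul honec).add (((continuous_const.mul continuous_id).continuousOn).mul hGci)
  have hψc : ContinuousOn ψ (Set.Icc a b) := by
    refine ContinuousOn.sub (ContinuousOn.add ?_ ?_) (hgci.pow 2)
    · exact ((hGci.pow 2).div honec hone_ne).const_smul (2:ℝ) |>.congr fun x hx => by simp
    · exact (honec.mul hUc).pow 2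
  have hψint : IntervalIntegrable ψ volume a b :=
    ContinuousOn.intervalIntegrable (by rw [huIcc]; exact hψc)
  have hFTC : ∫ x in a..b, ψ x = φ b - φ a :=
    intervalIntegral.integral_eq_sub_of_hasDerivAt
      (fun x hx => hφd x (huIcc ▸ hx)) hψint
  have hSnint : IntervalIntegrable (fun x => ((1-x^2)*U x)^2) volume a b :=
    ContinuousOn.intervalIntegrable (by rw [huIcc]; exact (honec.mul hUc).pow 2)
  have hgsqint : IntervalIntegrable (fun x => g x^2) volume a b :=
    ContinuousOn.intervalIntegrable (by rw [huIcc]; exact hgci.pow 2)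
  have hψsplit : ∫ x in a..b, ψ x
      = 2*(∫ x in a..b, (G x)^2/(1-x^2)) + (∫ x in a..b, ((1-x^2)*U x)^2)
        - ∫ x in a..b, g x^2 := by
    rw [hψ]
    rw [intervalIntegral.integral_sub ((hGsqint.const_mul 2).add hSnint) hgsqint,
      intervalIntegral.integral_add (hGsqint.const_mul 2) hSnint,
      intervalIntegral.integral_const_mul]
  have hSn0 : 0 ≤ ∫ x in a..b, ((1-x^2)*U x)^2 :=
    intervalIntegral.integral_nonneg hab (fun x _ => sq_nonneg _)
  -- bounds on φ at endpoints
  have hGb2 : (G b)^2 ≤ (M*e)^2 := by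
    have h := abs_le.1 (hGb b hbI)
    have hbe : 1 - b = e := by rw [hb]; ring
    rw [hbe] at h
    exact sq_le_sq' h.1 h.2
  have hGa2 : (G a)^2 ≤ (M*e)^2 := by
    have h := abs_le.1 (hGa a haI)
    have hae : 1 + a = e := by rw [ha]; ring
    rw [hae] at h
    exact sq_le_sq' h.1 h.2
  have hpb : 0 < 1 - b^2 := hx2pos b ⟨hab, le_refl b⟩
  have hpa : 0 < 1 - a^2 := hx2pos a ⟨le_refl a, hab⟩
  have hφb : φ b ≤ 2*M^2*e := by
    simp only [hφ]
    have h1 : 2*b/(1-b^2) * (G b)^2 = (2*b*(G b)^2)/(1-b^2) := by ring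
    rw [h1, div_le_iff₀ hpb]
    have h2 : (1:ℝ) - b^2 = e*(1+b) := by rw [hb]; ring
    rw [h2]
    have h3 : 2*b*(G b)^2 ≤ 2*(M*e)^2 := by
      nlinarith [mul_nonneg (sub_nonneg.2 hb1.le) (sq_nonneg (G b)), hGb2, hb0]
    have h4 : 2*(M*e)^2 ≤ 2*M^2*e*(e*(1+b)) := by
      nlinarith [mul_nonneg (mul_nonneg (sq_nonneg M) (sq_nonneg e)) hb0]
    linarith
  have hφa : -(φ a) ≤ 2*M^2*e := by
    simp only [hφ]
    have h1 : -(2*a/(1-a^2) * (G a)^2) = (-(2*a)*(G a)^2)/(1-a^2) := by ring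
    rw [h1, div_le_iff₀ hpa]
    have h2 : (1:ℝ) - a^2 = e*(1-a) := by rw [ha]; ring
    rw [h2]
    have h3 : -(2*a)*(G a)^2 ≤ 2*(M*e)^2 := by
      nlinarith [mul_nonneg (by linarith : (0:ℝ) ≤ 1 + a) (sq_nonneg (G a)), hGa2]
    have h4 : 2*(M*e)^2 ≤ 2*M^2*e*(e*(1-a)) := by
      nlinarith [mul_nonneg (mul_nonneg (sq_nonneg M) (sq_nonneg e)) (by linarith : (0:ℝ) ≤ -a)]
    linarith
  -- Hardy bound
  have hHardy : (∫ x in a..b, (G x)^2/(1-x^2))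
      ≤ 2*M^2*e + (∫ x in a..b, g x^2)/2 := by
    rw [hψsplit] at hFTC
    linarith
  -- combine
  have hfinal : (∫ x in a..b, g x^2) ≤ 8*M^2*e + A/2 := by linarith [hmain, hHardy]
  rw [← intervalIntegral.integral_of_le hab]
  exact hfinal

open Filter Topology in
/- STATEMENT 2: For every w : [−1,1] → ℝ that is square integrable, (weakly)
differentiable, and with ∫ (1−x²)|w'(x)|² dx < ∞, one has
∫ |w − w̄|² dx ≤ (1/2) ∫ (1−x²)|w'(x)|² dx, where w̄ = (1/2)∫ w. Weak
differentiability is rendered as differentiability on [−1,1], with derivWithin. -/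
theorem stmt2 (w : ℝ → ℝ)
    (hdiff : DifferentiableOn ℝ w (Set.Icc (-1:ℝ) 1))
    (hw2 : IntegrableOn (fun x => (w x) ^ 2) (Set.Icc (-1:ℝ) 1))
    (hw' : IntegrableOn
      (fun x => (1 - x ^ 2) * (derivWithin w (Set.Icc (-1:ℝ) 1) x) ^ 2)
      (Set.Icc (-1:ℝ) 1)) :
    (∫ x in Set.Icc (-1:ℝ) 1,
        (w x - (1 / 2) * ∫ y in Set.Icc (-1:ℝ) 1, w y) ^ 2) ≤
      (1 / 2) * ∫ x in Set.Icc (-1:ℝ) 1,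
        (1 - x ^ 2) * (derivWithin w (Set.Icc (-1:ℝ) 1) x) ^ 2 := by
  have h2 : (volume (Set.Icc (-1:ℝ) 1)) < ⊤ := by
    simp [Real.volume_Icc]
  have hwm : AEStronglyMeasurable w (volume.restrict (Set.Icc (-1:ℝ) 1)) :=
    hdiff.continuousOn.aestronglyMeasurable measurableSet_Icc
  have hwI : IntegrableOn w (Set.Icc (-1:ℝ) 1) := by
    have hb : IntegrableOn (fun x => ((w x)^2 + 1)/2) (Set.Icc (-1:ℝ) 1) :=
      (hw2.add (integrableOn_const h2.ne)).div_const 2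
    refine hb.mono' hwm (ae_of_all _ fun x => ?_)
    rw [Real.norm_eq_abs]
    rcases abs_cases (w x) with ⟨h, _⟩ | ⟨h, _⟩ <;> nlinarith [sq_nonneg (w x - 1), sq_nonneg (w x + 1)]
  set c : ℝ := (1/2) * ∫ y in Set.Icc (-1:ℝ) 1, w y with hc
  set g : ℝ → ℝ := fun x => w x - c with hgdef
  have hgc : ContinuousOn g (Set.Icc (-1:ℝ) 1) := hdiff.continuousOn.sub continuousOn_const
  have hgI : IntegrableOn g (Set.Icc (-1:ℝ) 1) := by
    refine hwI.sub (integrableOn_const ?_); simp [Real.volume_Icc]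
  have hgint0 : ∫ x in Set.Icc (-1:ℝ) 1, g x = 0 := by
    rw [hgdef]
    rw [integral_sub hwI (integrableOn_const (by simp [Real.volume_Icc]))]
    rw [setIntegral_const]
    simp only [Real.volume_real_Icc]
    rw [hc]
    norm_num
    ring
  have hgii : ∀ p ∈ Set.Icc (-1:ℝ) 1, ∀ q ∈ Set.Icc (-1:ℝ) 1, IntervalIntegrable g volume p q := by
    intro p hp q hq
    refine (hgI.mono_set ?_).intervalIntegrable
    have he : Set.uIcc (-1:ℝ) 1 = Set.Icc (-1:ℝ) 1 := Set.uIcc_of_le (by norm_num)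
    rw [← he]
    exact Set.uIcc_subset_uIcc (he ▸ hp) (he ▸ hq)
  set G : ℝ → ℝ := fun x => ∫ t in (-1:ℝ)..x, g t with hGdef
  have hG1 : G 1 = 0 := by
    show (∫ t in (-1:ℝ)..1, g t) = 0
    rw [intervalIntegral.integral_of_le (by norm_num), ← integral_Icc_eq_integral_Ioc]
    exact hgint0
  obtain ⟨M, hM⟩ := isCompact_Icc.exists_bound_of_continuousOn hgc
  have hM0 : 0 ≤ M := le_trans (norm_nonneg _) (hM 0 (by norm_num))
  have hGa : ∀ x ∈ Set.Icc (-1:ℝ) 1, |G x| ≤ M * (1 + x) := by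
    intro x hx
    have := intervalIntegral.norm_integral_le_of_norm_le_const
      (C := M) (f := g) (a := (-1:ℝ)) (b := x) ?_
    · rw [Real.norm_eq_abs] at this
      calc |G x| ≤ M * |x - (-1)| := this
        _ = M * (1 + x) := by rw [abs_of_nonneg (by linarith [hx.1])]; ring
    · intro t ht
      have ht' : t ∈ Set.Icc (-1:ℝ) 1 := by
        rcases Set.uIoc_subset_uIcc ht with h
        rw [Set.uIcc_of_le (by linarith [hx.1] : (-1:ℝ) ≤ x)] at h
        exact ⟨h.1, le_trans h.2 hx.2⟩
      exact hM t ht'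
  have hGb : ∀ x ∈ Set.Icc (-1:ℝ) 1, |G x| ≤ M * (1 - x) := by
    intro x hx
    have hadd : G x + ∫ t in x..(1:ℝ), g t = G 1 :=
      intervalIntegral.integral_add_adjacent_intervals
        (hgii _ (by norm_num) _ hx) (hgii _ hx _ (by norm_num))
    have h2 : |∫ t in x..(1:ℝ), g t| ≤ M * |1 - x| := by
      have := intervalIntegral.norm_integral_le_of_norm_le_const
        (C := M) (f := g) (a := x) (b := (1:ℝ)) ?_
      · simpa [Real.norm_eq_abs] using this
      intro t ht
      have ht' : t ∈ Set.Icc (-1:ℝ) 1 := by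
        rcases Set.uIoc_subset_uIcc ht with h
        rw [Set.uIcc_of_le hx.2] at h
        exact ⟨le_trans hx.1 h.1, h.2⟩
      exact hM t ht'
    have : G x = -∫ t in x..(1:ℝ), g t := by rw [hG1] at hadd; linarith
    rw [this, abs_neg]
    calc |∫ t in x..(1:ℝ), g t| ≤ M * |1 - x| := h2
      _ = M * (1 - x) := by rw [abs_of_nonneg (by linarith [hx.2])]
  have hGd : ∀ x ∈ Set.Ioo (-1:ℝ) 1, HasDerivAt G (g x) x := by
    intro x hx
    have hgco : ContinuousOn g (Set.Ioo (-1:ℝ) 1) := hgc.mono Set.Ioo_subset_Icc_self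
    exact intervalIntegral.integral_hasDerivAt_right
      (hgii _ (by norm_num) _ (Set.Ioo_subset_Icc_self hx))
      (hgco.stronglyMeasurableAtFilter isOpen_Ioo x hx)
      (hgco.continuousAt (isOpen_Ioo.mem_nhds hx))
  -- derivative facts
  have hwd : ∀ x ∈ Set.Ioo (-1:ℝ) 1, HasDerivAt w (deriv w x) x := by
    intro x hx
    have hn : Set.Icc (-1:ℝ) 1 ∈ 𝓝 x := Icc_mem_nhds hx.1 hx.2
    exact ((hdiff x (Set.Ioo_subset_Icc_self hx)).differentiableAt hn).hasDerivAt
  have hdweq : ∀ x ∈ Set.Ioo (-1:ℝ) 1, derivWithin w (Set.Icc (-1:ℝ) 1) x = deriv w x := by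
    intro x hx
    exact derivWithin_of_mem_nhds (Icc_mem_nhds hx.1 hx.2)
  have hw'Ioo : IntegrableOn (fun x => (1-x^2)*(deriv w x)^2) (Set.Ioo (-1:ℝ) 1) := by
    refine (hw'.mono_set Set.Ioo_subset_Icc_self).congr_fun ?_ measurableSet_Ioo
    intro x hx
    show (1 - x^2) * (derivWithin w (Set.Icc (-1:ℝ) 1) x)^2 = (1-x^2)*(deriv w x)^2
    rw [hdweq x hx]
  set A : ℝ := ∫ x in Set.Ioo (-1:ℝ) 1, (1-x^2)*(deriv w x)^2 with hA
  have hAR : A = ∫ x in Set.Icc (-1:ℝ) 1,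
      (1 - x ^ 2) * (derivWithin w (Set.Icc (-1:ℝ) 1) x) ^ 2 := by
    rw [integral_Icc_eq_integral_Ioo, hA]
    refine setIntegral_congr_fun measurableSet_Ioo fun x hx => ?_
    show (1-x^2)*(deriv w x)^2 = (1 - x^2) * (derivWithin w (Set.Icc (-1:ℝ) 1) x)^2
    rw [hdweq x hx]
  -- key estimate for each n
  have key : ∀ n : ℕ, (∫ x in Set.Ioc (-1+1/((n:ℝ)+1)) (1-1/((n:ℝ)+1)), g x ^ 2)
      ≤ 8*M^2*(1/((n:ℝ)+1)) + A/2 := by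
    intro n
    refine stmt2_key w g G c M A (1/((n:ℝ)+1)) (by positivity) ?_ hgdef hwd hGd hgc
      (fun x hx => hM x hx) hM0 hGa hGb hw'Ioo hA
    rw [div_le_one (by positivity)]
    linarith [(n.cast_nonneg : (0:ℝ) ≤ n)]
  -- limit argument
  have hgsqI : IntegrableOn (fun x => g x ^ 2) (Set.Ioo (-1:ℝ) 1) :=
    ((hgc.pow 2).integrableOn_compact isCompact_Icc).mono_set Set.Ioo_subset_Icc_self
  have hlim : (∫ x in Set.Ioo (-1:ℝ) 1, g x ^ 2) ≤ A/2 := by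
    set s : ℕ → Set ℝ := fun n => Set.Ioc (-1+1/((n:ℝ)+1)) (1-1/((n:ℝ)+1)) with hs
    have hsm : ∀ n, MeasurableSet (s n) := fun n => measurableSet_Ioc
    have hmono : Monotone s := by
      intro m n hmn
      have h1 : 1/((n:ℝ)+1) ≤ 1/((m:ℝ)+1) := by
        apply one_div_le_one_div_of_le (by positivity)
        exact_mod_cast Nat.succ_le_succ hmn
      exact Set.Ioc_subset_Ioc (by linarith) (by linarith)
    have hunion : (⋃ n, s n) = Set.Ioo (-1:ℝ) 1 := by
      ext x
      simp only [Set.mem_iUnion, hs, Set.mem_Ioc, Set.mem_Ioo]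
      constructor
      · rintro ⟨n, h1', h2'⟩
        have hp : 0 < 1/((n:ℝ)+1) := by positivity
        constructor <;> linarith
      · rintro ⟨h1', h2'⟩
        obtain ⟨n, hn⟩ := exists_nat_one_div_lt (show (0:ℝ) < min (x+1) (1-x) by
          simp only [lt_min_iff]; constructor <;> linarith)
        refine ⟨n, ?_, ?_⟩
        · have := lt_of_lt_of_le hn (min_le_left _ _); linarith
        · have := lt_of_lt_of_le hn (min_le_right _ _); linarith
    have htend : Tendsto (fun n => ∫ x in s n, g x ^ 2) atTop
        (𝓝 (∫ x in Set.Ioo (-1:ℝ) 1, g x ^ 2)) := by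
      have := tendsto_setIntegral_of_monotone hsm hmono (hunion ▸ hgsqI)
      rwa [hunion] at this
    have hrhs : Tendsto (fun n : ℕ => 8*M^2*(1/((n:ℝ)+1)) + A/2) atTop (𝓝 (A/2)) := by
      have h0 : Tendsto (fun n : ℕ => 8*M^2*(1/((n:ℝ)+1))) atTop (𝓝 0) := by
        have := tendsto_one_div_add_atTop_nhds_zero_nat (𝕜 := ℝ)
        simpa using this.const_mul (8*M^2)
      simpa using h0.add (tendsto_const_nhds (x := A/2))
    exact le_of_tendsto_of_tendsto' htend hrhs key
  -- conclude
  have hfin : (∫ x in Set.Icc (-1:ℝ) 1, g x ^ 2) ≤ A/2 := by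
    rwa [integral_Icc_eq_integral_Ioo]
  have hgoal : (∫ x in Set.Icc (-1:ℝ) 1, (w x - c) ^ 2) = ∫ x in Set.Icc (-1:ℝ) 1, g x ^ 2 := by
    rfl
  rw [hgoal, ← hAR]
  linarith
end

section
/- Fix γ > 1 and v₋ > 0. There exists a constant C > 0 such that for all real numbers v, w with 0 < w < 2v₋ and 0 < v ≤ 3v₋, one has |v − w|² ≤ C · Q(v|w) and |v − w|² ≤ C · p(v|w). -/
open Set

/-- Strong tangent-line bound: if `f'' ≥ m` on `Ioo 0 R`, then
`f v - f w - f' w (v - w) ≥ m/2 (v-w)²` for `v w ∈ Ioo 0 R`. -/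
lemma strong_tangent {f f' f'' : ℝ → ℝ} {m R : ℝ}
    (hd1 : ∀ x ∈ Ioo (0:ℝ) R, HasDerivAt f (f' x) x)
    (hd2 : ∀ x ∈ Ioo (0:ℝ) R, HasDerivAt f' (f'' x) x)
    (hm : ∀ x ∈ Ioo (0:ℝ) R, m ≤ f'' x)
    {v w : ℝ} (hv : v ∈ Ioo (0:ℝ) R) (hw : w ∈ Ioo (0:ℝ) R) :
    m / 2 * (v - w) ^ 2 ≤ f v - f w - f' w * (v - w) := by
  set D : Set ℝ := Ioo (0:ℝ) R with hD
  have hint : interior D = D := interior_Ioo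
  set g : ℝ → ℝ := fun x => f x - m / 2 * x ^ 2 with hg
  set g' : ℝ → ℝ := fun x => f' x - m * x with hg'
  have hgd : ∀ x ∈ D, HasDerivAt g (g' x) x := by
    intro x hx
    have h1 : HasDerivAt (fun x : ℝ => m / 2 * x ^ 2) (m / 2 * (2 * x)) x := by
      simpa using ((hasDerivAt_pow 2 x).const_mul (m / 2))
    have := (hd1 x hx).sub h1
    have h2 := this.congr_deriv (show f' x - m / 2 * (2 * x) = f' x - m * x by ring)
    exact h2
  have hgd2 : ∀ x ∈ D, HasDerivAt g' (f'' x - m) x := by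
    intro x hx
    have h2 := (hd2 x hx).sub ((hasDerivAt_id x).const_mul m)
    rw [mul_one] at h2
    exact h2
  have hconv : ConvexOn ℝ D g := by
    refine convexOn_of_hasDerivWithinAt2_nonneg (f' := g') (f'' := fun x => f'' x - m)
      (convex_Ioo _ _)
      (fun x hx => (hgd x hx).continuousAt.continuousWithinAt)
      (fun x hx => ?_) (fun x hx => ?_) (fun x hx => ?_)
    · rw [hint] at hx ⊢; exact (hgd x hx).hasDerivWithinAt
    · rw [hint] at hx ⊢; exact (hgd2 x hx).hasDerivWithinAt
    · rw [hint] at hx; exact sub_nonneg.2 (hm x hx)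
  -- tangent line inequality for g at w
  have htan : g w + g' w * (v - w) ≤ g v := by
    rcases lt_trichotomy v w with h | h | h
    · have := hconv.slope_le_of_hasDerivAt hv hw h (hgd w hw)
      rw [slope_def_field, div_le_iff₀ (by linarith : (0:ℝ) < w - v)] at this
      · nlinarith [this]
    · simp [h]
    · have := hconv.le_slope_of_hasDerivAt hw hv h (hgd w hw)
      rw [slope_def_field, le_div_iff₀ (by linarith : (0:ℝ) < v - w)] at this
      · nlinarith [this]
  simp only [g, g'] at htan
  nlinarith [htan]

lemma rpow_deriv_aux {a : ℝ} {x : ℝ} (hx : 0 < x) :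
    HasDerivAt (fun y : ℝ => y ^ a) (a * x ^ (a - 1)) x :=
  Real.hasDerivAt_rpow_const (Or.inl hx.ne')

theorem stmt4 (γ vm : ℝ) (hγ : 1 < γ) (hvm : 0 < vm) :
    ∃ C > (0:ℝ), ∀ v w : ℝ, 0 < w → w < 2 * vm → 0 < v → v ≤ 3 * vm →
      (v - w) ^ 2 ≤ C * ((v ^ (1 - γ) - w ^ (1 - γ)) / (γ - 1) + w ^ (-γ) * (v - w)) ∧
      (v - w) ^ 2 ≤ C * (v ^ (-γ) - w ^ (-γ) + γ * w ^ (-γ - 1) * (v - w)) := by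
  have h4 : (0:ℝ) < 4 * vm := by linarith
  set R : ℝ := 4 * vm with hR
  have hγ0 : (0:ℝ) < γ := by linarith
  set mQ : ℝ := γ * R ^ (-γ - 1) with hmQ
  set mp : ℝ := γ * (γ + 1) * R ^ (-γ - 2) with hmp
  have hmQpos : 0 < mQ := mul_pos hγ0 (Real.rpow_pos_of_pos h4 _)
  have hmppos : 0 < mp := by
    exact mul_pos (mul_pos hγ0 (by linarith)) (Real.rpow_pos_of_pos h4 _)
  refine ⟨max (2 / mQ) (2 / mp), lt_max_of_lt_left (by positivity), ?_⟩
  intro v w hw0 hw2 hv0 hv3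
  have hvD : v ∈ Ioo (0:ℝ) R := ⟨hv0, by simp only [hR]; linarith⟩
  have hwD : w ∈ Ioo (0:ℝ) R := ⟨hw0, by simp only [hR]; linarith⟩
  -- Q part
  have hQ : mQ / 2 * (v - w) ^ 2 ≤
      (v ^ (1 - γ) - w ^ (1 - γ)) / (γ - 1) + w ^ (-γ) * (v - w) := by
    have key := strong_tangent (f := fun x => x ^ (1 - γ) / (γ - 1))
      (f' := fun x => -(x ^ (-γ))) (f'' := fun x => γ * x ^ (-γ - 1)) (m := mQ) (R := R)
      (fun x hx => ?_) (fun x hx => ?_) (fun x hx => ?_) hvD hwD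
    · have key' : mQ / 2 * (v - w) ^ 2 ≤
          v ^ (1 - γ) / (γ - 1) - w ^ (1 - γ) / (γ - 1) - -(w ^ (-γ)) * (v - w) := key
      have e : (v ^ (1 - γ) - w ^ (1 - γ)) / (γ - 1)
          = v ^ (1 - γ) / (γ - 1) - w ^ (1 - γ) / (γ - 1) := sub_div _ _ _
      rw [e]; linarith
    · have h := (rpow_deriv_aux (a := 1 - γ) hx.1).div_const (γ - 1)
      have he : (1 - γ) * x ^ (1 - γ - 1) / (γ - 1) = -(x ^ (-γ)) := by
        rw [show (1 - γ - 1) = -γ by ring, div_eq_iff (by linarith : γ - 1 ≠ 0)]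
        ring
      rw [he] at h; exact h
    · have h := (rpow_deriv_aux (a := -γ) hx.1).neg
      have he : -(-γ * x ^ (-γ - 1)) = γ * x ^ (-γ - 1) := by ring
      rw [he] at h; exact h
    · have : x ^ (-γ - 1) ≥ R ^ (-γ - 1) :=
        Real.rpow_le_rpow_of_nonpos hx.1 hx.2.le (by linarith)
      rw [hmQ]
      exact mul_le_mul_of_nonneg_left this hγ0.le
  -- p part
  have hp : mp / 2 * (v - w) ^ 2 ≤
      v ^ (-γ) - w ^ (-γ) + γ * w ^ (-γ - 1) * (v - w) := by
    have key := strong_tangent (f := fun x => x ^ (-γ))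
      (f' := fun x => -γ * x ^ (-γ - 1)) (f'' := fun x => γ * (γ + 1) * x ^ (-γ - 2))
      (m := mp) (R := R)
      (fun x hx => ?_) (fun x hx => ?_) (fun x hx => ?_) hvD hwD
    · have key' : mp / 2 * (v - w) ^ 2 ≤
          v ^ (-γ) - w ^ (-γ) - -γ * w ^ (-γ - 1) * (v - w) := key
      linarith
    · exact rpow_deriv_aux hx.1
    · have h := (rpow_deriv_aux (a := -γ - 1) hx.1).const_mul (-γ)
      have he : -γ * ((-γ - 1) * x ^ (-γ - 1 - 1)) = γ * (γ + 1) * x ^ (-γ - 2) := by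
        rw [show (-γ - 1 - 1) = -γ - 2 by ring]; ring
      rw [he] at h; exact h
    · have : x ^ (-γ - 2) ≥ R ^ (-γ - 2) :=
        Real.rpow_le_rpow_of_nonpos hx.1 hx.2.le (by linarith)
      rw [hmp]
      exact mul_le_mul_of_nonneg_left this (mul_pos hγ0 (by linarith : (0:ℝ) < γ + 1)).le
  constructor
  · have h1 : (v - w) ^ 2 ≤ 2 / mQ *
        ((v ^ (1 - γ) - w ^ (1 - γ)) / (γ - 1) + w ^ (-γ) * (v - w)) := by
      rw [div_mul_eq_mul_div, le_div_iff₀ hmQpos]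
      nlinarith [hQ]
    refine h1.trans (mul_le_mul_of_nonneg_right (le_max_left _ _) ?_)
    nlinarith [hQ, hmQpos, sq_nonneg (v - w)]
  · have h1 : (v - w) ^ 2 ≤ 2 / mp *
        (v ^ (-γ) - w ^ (-γ) + γ * w ^ (-γ - 1) * (v - w)) := by
      rw [div_mul_eq_mul_div, le_div_iff₀ hmppos]
      nlinarith [hp]
    refine h1.trans (mul_le_mul_of_nonneg_right (le_max_right _ _) ?_)
    nlinarith [hp, hmppos, sq_nonneg (v - w)]
end

section
/- Fix γ > 1 and v₋ > 0. There exist constants C > 0 and δ* > 0 such that for every δ with 0 < δ < δ*, and for all v, w > 0 satisfying |p(v) − p(w)| < δ and |p(w) − p(v₋)| < δ, one has p(v|w) ≤ ( (γ+1)/(2γ) · 1/p(w) + Cδ ) · |p(v) − p(w)|². -/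
open Set

private lemma mvt_rpow {μ a b : ℝ} (ha : 0 < a) (hab : a < b) :
    ∃ c, a < c ∧ c < b ∧ b ^ μ - a ^ μ = μ * c ^ (μ - 1) * (b - a) := by
  obtain ⟨c, hc, hceq⟩ := exists_hasDerivAt_eq_slope (fun x => x ^ μ)
    (fun x => μ * x ^ (μ - 1)) hab
    (fun x hx => (Real.continuousAt_rpow_const x μ
      (Or.inl (ne_of_gt (lt_of_lt_of_le ha hx.1)))).continuousWithinAt)
    (fun x hx => Real.hasDerivAt_rpow_const (Or.inl (ne_of_gt (ha.trans hx.1))))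
  refine ⟨c, hc.1, hc.2, ?_⟩
  have hba : b - a ≠ 0 := sub_ne_zero.mpr hab.ne'
  field_simp at hceq
  linarith [hceq]

private lemma mvt_rpow' {μ v w : ℝ} (hv : 0 < v) (hw : 0 < w) (hvw : v ≠ w) :
    ∃ d, min v w < d ∧ d < max v w ∧ v ^ μ - w ^ μ = μ * d ^ (μ - 1) * (v - w) := by
  rcases lt_or_gt_of_ne hvw with h | h
  · obtain ⟨c, h1, h2, h3⟩ := mvt_rpow (μ := μ) hv h
    exact ⟨c, by simp [min_eq_left h.le, h1], by simp [max_eq_right h.le, h2],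
      by linear_combination -h3⟩
  · obtain ⟨c, h1, h2, h3⟩ := mvt_rpow (μ := μ) hw h
    exact ⟨c, by simp [min_eq_right h.le, h1], by simp [max_eq_left h.le, h2],
      by linear_combination h3⟩

private lemma taylor_rpow {γ v w : ℝ} (hγ : 0 < γ) (hv : 0 < v) (hw : 0 < w) (hvw : v ≠ w) :
    ∃ e, min v w < e ∧ e < max v w ∧
      v ^ (-γ) - w ^ (-γ) + γ * w ^ (-γ - 1) * (v - w)
        = γ * (γ + 1) / 2 * e ^ (-γ - 2) * (v - w) ^ 2 := by
  have hs : ((v - w) ^ 2 : ℝ) ≠ 0 := pow_ne_zero 2 (sub_ne_zero.mpr hvw)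
  set K : ℝ := (v ^ (-γ) - w ^ (-γ) + γ * w ^ (-γ - 1) * (v - w)) / (v - w) ^ 2 with hK
  set g : ℝ → ℝ := fun x => x ^ (-γ) - w ^ (-γ) + γ * w ^ (-γ - 1) * (x - w) - K * (x - w) ^ 2
    with hg
  have hgderiv : ∀ x : ℝ, 0 < x →
      HasDerivAt g (-γ * x ^ (-γ - 1) + γ * w ^ (-γ - 1) - K * (2 * (x - w))) x := by
    intro x hx
    have h1 : HasDerivAt (fun x : ℝ => x ^ (-γ)) (-γ * x ^ (-γ - 1)) x :=
      Real.hasDerivAt_rpow_const (Or.inl hx.ne')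
    have h2 : HasDerivAt (fun x : ℝ => γ * w ^ (-γ - 1) * (x - w)) (γ * w ^ (-γ - 1)) x := by
      simpa using (((hasDerivAt_id x).sub_const w).const_mul (γ * w ^ (-γ - 1)))
    have h3 : HasDerivAt (fun x : ℝ => K * (x - w) ^ 2) (K * (2 * (x - w))) x := by
      have := (((hasDerivAt_id x).sub_const w).pow 2).const_mul K
      simpa using this
    exact ((h1.sub_const _).add h2).sub h3
  have hgw : g w = 0 := by simp [hg]
  have hgv : g v = 0 := by
    simp only [hg, hK]
    field_simp
    ring
  have main : ∃ c, min v w < c ∧ c < max v w ∧ c ≠ w ∧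
      -γ * c ^ (-γ - 1) + γ * w ^ (-γ - 1) - K * (2 * (c - w)) = 0 := by
    rcases lt_or_gt_of_ne hvw with h | h
    · obtain ⟨c, hc, hceq⟩ := exists_hasDerivAt_eq_slope g
        (fun x => -γ * x ^ (-γ - 1) + γ * w ^ (-γ - 1) - K * (2 * (x - w))) h
        (fun x hx => (hgderiv x (lt_of_lt_of_le hv hx.1)).continuousAt.continuousWithinAt)
        (fun x hx => hgderiv x (hv.trans hx.1))
      refine ⟨c, by simp [min_eq_left h.le, hc.1], by simp [max_eq_right h.le, hc.2],
        ne_of_lt hc.2, ?_⟩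
      rw [hceq, hgv, hgw]; simp
    · obtain ⟨c, hc, hceq⟩ := exists_hasDerivAt_eq_slope g
        (fun x => -γ * x ^ (-γ - 1) + γ * w ^ (-γ - 1) - K * (2 * (x - w))) h
        (fun x hx => (hgderiv x (lt_of_lt_of_le hw hx.1)).continuousAt.continuousWithinAt)
        (fun x hx => hgderiv x (hw.trans hx.1))
      refine ⟨c, by simp [min_eq_right h.le, hc.1], by simp [max_eq_left h.le, hc.2],
        ne_of_gt hc.1, ?_⟩
      rw [hceq, hgv, hgw]; simp
  obtain ⟨c, hc1, hc2, hcw, hc3⟩ := main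
  have hc0 : 0 < c := (lt_min hv hw).trans hc1
  obtain ⟨e, he1, he2, he3⟩ := mvt_rpow' (μ := -γ - 1) hc0 hw hcw
  rw [show (-γ - 1 - 1 : ℝ) = -γ - 2 by ring] at he3
  have heL : min v w < e := lt_of_le_of_lt (le_min hc1.le (min_le_right v w)) he1
  have heR : e < max v w := lt_of_lt_of_le he2 (max_le hc2.le (le_max_right v w))
  have hcw0 : (2 : ℝ) * (c - w) ≠ 0 := mul_ne_zero two_ne_zero (sub_ne_zero.mpr hcw)
  have hKval : K = γ * (γ + 1) / 2 * e ^ (-γ - 2) := by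
    apply mul_right_cancel₀ hcw0
    linear_combination -hc3 - γ * he3
  refine ⟨e, heL, heR, ?_⟩
  rw [← hKval, hK]
  field_simp

/- STATEMENT 6: For γ > 1 and v₋ > 0 (denoted vm), there are C > 0 and δ* > 0 such
that for all 0 < δ < δstar, and all v, w > 0 with |p(v) − p(w)| < δ and
|p(w) − p(v₋)| < δ, one has
p(v|w) ≤ ((γ+1)/(2γ) · 1/p(w) + Cδ) · |p(v) − p(w)|²,
where p(v) = v^(−γ) and p(v|w) = v^(−γ) − w^(−γ) + γ w^(−γ−1)(v−w). -/
set_option maxHeartbeats 2000000 in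
theorem stmt6 (γ vm : ℝ) (hγ : 1 < γ) (hvm : 0 < vm) :
    ∃ C > (0:ℝ), ∃ δstar > (0:ℝ), ∀ δ : ℝ, 0 < δ → δ < δstar →
      ∀ v w : ℝ, 0 < v → 0 < w →
        |v ^ (-γ) - w ^ (-γ)| < δ → |w ^ (-γ) - vm ^ (-γ)| < δ →
        v ^ (-γ) - w ^ (-γ) + γ * w ^ (-γ - 1) * (v - w) ≤
          ((γ + 1) / (2 * γ) * (1 / w ^ (-γ)) + C * δ) * |v ^ (-γ) - w ^ (-γ)| ^ 2 := by
  have hγ0 : 0 < γ := by linarith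
  set w₁ : ℝ := vm / 2 with hw₁def
  set w₂ : ℝ := 2 * vm with hw₂def
  have hw₁ : 0 < w₁ := by positivity
  have hw₂ : 0 < w₂ := by positivity
  have hβ₁ : vm ^ (-γ) < w₁ ^ (-γ) :=
    Real.rpow_lt_rpow_of_neg hw₁ (by rw [hw₁def]; linarith) (by linarith)
  have hβ₂ : w₂ ^ (-γ) < vm ^ (-γ) :=
    Real.rpow_lt_rpow_of_neg hvm (by rw [hw₂def]; linarith) (by linarith)
  set m : ℝ := γ * w₂ ^ (-γ - 1) with hmdef
  have hm : 0 < m := by positivity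
  set A₁ : ℝ := (γ + 2) * w₁ ^ (-γ - 3) with hA₁def
  set A₂ : ℝ := (2 * γ + 2) * w₂ ^ (2 * γ + 1) with hA₂def
  set B₁ : ℝ := w₁ ^ (-γ - 2) with hB₁def
  set B₂ : ℝ := w₂ ^ (2 * γ + 2) with hB₂def
  have hA₁0 : 0 < A₁ := by positivity
  have hA₂0 : 0 < A₂ := by positivity
  have hB₁0 : 0 < B₁ := by positivity
  have hB₂0 : 0 < B₂ := by positivity
  set S : ℝ := B₁ * A₂ + B₂ * A₁ + A₁ * A₂ with hSdef
  have hS0 : 0 < S := by positivity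
  refine ⟨(γ + 1) / (2 * γ) * S / m, by positivity,
    min (min ((w₁ ^ (-γ) - vm ^ (-γ)) / 2) ((vm ^ (-γ) - w₂ ^ (-γ)) / 2)) (min m 1),
    by refine lt_min (lt_min ?_ ?_) (lt_min hm one_pos) <;> linarith, ?_⟩
  intro δ hδ0 hδs v w hv hw hpv hpw
  simp only [lt_min_iff] at hδs
  obtain ⟨⟨hδ1, hδ2⟩, hδm, hδone⟩ := hδs
  by_cases hvw : v = w
  · subst hvw; simp
  -- box bounds
  have habs_pw := abs_lt.mp hpw
  have hpv' : |v ^ (-γ) - vm ^ (-γ)| < 2 * δ := by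
    calc |v ^ (-γ) - vm ^ (-γ)| ≤ |v ^ (-γ) - w ^ (-γ)| + |w ^ (-γ) - vm ^ (-γ)| :=
          abs_sub_le _ _ _
      _ < 2 * δ := by linarith
  have habs_pv := abs_lt.mp hpv'
  have hwgt : w₁ < w := by
    by_contra h; push_neg at h
    have : w₁ ^ (-γ) ≤ w ^ (-γ) := Real.rpow_le_rpow_of_nonpos hw h (by linarith)
    linarith
  have hwlt : w < w₂ := by
    by_contra h; push_neg at h
    have : w ^ (-γ) ≤ w₂ ^ (-γ) := Real.rpow_le_rpow_of_nonpos hw₂ h (by linarith)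
    linarith
  have hvgt : w₁ < v := by
    by_contra h; push_neg at h
    have : w₁ ^ (-γ) ≤ v ^ (-γ) := Real.rpow_le_rpow_of_nonpos hv h (by linarith)
    linarith
  have hvlt : v < w₂ := by
    by_contra h; push_neg at h
    have : v ^ (-γ) ≤ w₂ ^ (-γ) := Real.rpow_le_rpow_of_nonpos hw₂ h (by linarith)
    linarith
  have hℓ : w₁ < min v w := lt_min hvgt hwgt
  have hu : max v w < w₂ := max_lt hvlt hwlt
  have hℓ0 : 0 < min v w := hw₁.trans hℓ
  -- MVT for Δp
  obtain ⟨d, hd1, hd2, hd3⟩ := mvt_rpow' (μ := -γ) hv hw hvw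
  have hd0 : 0 < d := hℓ0.trans hd1
  have hdw₂ : d < w₂ := hd2.trans hu
  have hdpow : w₂ ^ (-γ - 1) ≤ d ^ (-γ - 1) :=
    Real.rpow_le_rpow_of_nonpos hd0 hdw₂.le (by linarith)
  have hd0' : (0:ℝ) < d ^ (-γ - 1) := by positivity
  have habs : |v ^ (-γ) - w ^ (-γ)| = γ * d ^ (-γ - 1) * |v - w| := by
    rw [hd3, abs_mul, abs_mul, abs_neg, abs_of_pos hγ0, abs_of_pos hd0']
  have hvwsmall : |v - w| < δ / m := by
    rw [lt_div_iff₀ hm]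
    have h2 : m ≤ γ * d ^ (-γ - 1) := by
      rw [hmdef]; exact mul_le_mul_of_nonneg_left hdpow hγ0.le
    have h1 : m * |v - w| ≤ γ * d ^ (-γ - 1) * |v - w| :=
      mul_le_mul_of_nonneg_right h2 (abs_nonneg _)
    rw [habs] at hpv
    linarith
  set r : ℝ := δ / m with hrdef
  have hr0 : 0 < r := by positivity
  have hr1 : r < 1 := (div_lt_one hm).mpr hδm
  -- Taylor
  obtain ⟨e, he1, he2, he3⟩ := taylor_rpow hγ0 hv hw hvw
  have he0 : 0 < e := hℓ0.trans he1
  have heb : e ^ (-γ - 2) ≤ (min v w) ^ (-γ - 2) :=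
    Real.rpow_le_rpow_of_nonpos hℓ0 he1.le (by linarith)
  -- Lipschitz bound for min
  have hlb : (min v w) ^ (-γ - 2) ≤ w ^ (-γ - 2) + A₁ * r := by
    rcases eq_or_lt_of_le (min_le_right v w) with h | h
    · rw [h]; linarith [mul_pos hA₁0 hr0]
    · obtain ⟨c, hcc1, hcc2, hcc3⟩ := mvt_rpow (μ := -γ - 2) hℓ0 h
      rw [show (-γ - 2 - 1 : ℝ) = -γ - 3 by ring] at hcc3
      have hc0 : 0 < c := hℓ0.trans hcc1
      have hcpow : c ^ (-γ - 3) ≤ w₁ ^ (-γ - 3) :=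
        Real.rpow_le_rpow_of_nonpos hw₁ (hℓ.trans hcc1).le (by linarith)
      have hwl : w - min v w ≤ |v - w| := by
        rcases le_total v w with h' | h'
        · rw [min_eq_left h', abs_sub_comm]; exact le_abs_self _
        · rw [min_eq_right h']; simp [abs_nonneg]
      have hwl' : w - min v w ≤ r := hwl.trans hvwsmall.le
      have hcp0 : (0:ℝ) < c ^ (-γ - 3) := by positivity
      have hw₁p : (0:ℝ) < w₁ ^ (-γ - 3) := by positivity
      have hcc3' : (min v w) ^ (-γ - 2)
          = w ^ (-γ - 2) + (γ + 2) * c ^ (-γ - 3) * (w - min v w) := by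
        linear_combination -hcc3
      have e1 : (γ + 2) * c ^ (-γ - 3) * (w - min v w)
          ≤ (γ + 2) * w₁ ^ (-γ - 3) * r := by
        apply mul_le_mul (mul_le_mul_of_nonneg_left hcpow (by linarith)) hwl'
          (by linarith) (by positivity)
      rw [hA₁def]
      linarith only [hcc3', e1]
  -- Lipschitz bound for max
  have hub : (max v w) ^ (2 * γ + 2) ≤ w ^ (2 * γ + 2) + A₂ * r := by
    rcases eq_or_lt_of_le (le_max_right v w) with h | h
    · rw [← h]; linarith [mul_pos hA₂0 hr0]
    · obtain ⟨c, hcc1, hcc2, hcc3⟩ := mvt_rpow (μ := 2 * γ + 2) hw h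
      rw [show (2 * γ + 2 - 1 : ℝ) = 2 * γ + 1 by ring] at hcc3
      have hc0 : 0 < c := hw.trans hcc1
      have hcpow : c ^ (2 * γ + 1) ≤ w₂ ^ (2 * γ + 1) :=
        Real.rpow_le_rpow hc0.le (hcc2.trans hu).le (by linarith)
      have hwl : max v w - w ≤ |v - w| := by
        rcases le_total v w with h' | h'
        · rw [max_eq_right h']; simp [abs_nonneg]
        · rw [max_eq_left h']; exact le_abs_self _
      have hwl' : max v w - w ≤ r := hwl.trans hvwsmall.le
      have hcp0 : (0:ℝ) < c ^ (2 * γ + 1) := by positivity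
      have hw₂p : (0:ℝ) < w₂ ^ (2 * γ + 1) := by positivity
      have hcc3' : (max v w) ^ (2 * γ + 2)
          = w ^ (2 * γ + 2) + (2 * γ + 2) * c ^ (2 * γ + 1) * (max v w - w) := by
        linear_combination hcc3
      have e1 : (2 * γ + 2) * c ^ (2 * γ + 1) * (max v w - w)
          ≤ (2 * γ + 2) * w₂ ^ (2 * γ + 1) * r := by
        apply mul_le_mul (mul_le_mul_of_nonneg_left hcpow (by linarith)) hwl'
          (by linarith) (by positivity)
      rw [hA₂def]
      linarith only [hcc3', e1]
  -- step 7: (v-w)^2 ≤ u^(2γ+2) Δp²/γ²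
  have htq : d ^ (-γ - 1) * d ^ (-γ - 1) * d ^ (2 * γ + 2) = 1 := by
    rw [← Real.rpow_add hd0, ← Real.rpow_add hd0,
      show (-γ - 1 + (-γ - 1) + (2 * γ + 2) : ℝ) = 0 by ring, Real.rpow_zero]
  have hq : d ^ (2 * γ + 2) ≤ (max v w) ^ (2 * γ + 2) :=
    Real.rpow_le_rpow hd0.le hd2.le (by linarith)
  have hq0 : (0:ℝ) < d ^ (2 * γ + 2) := by positivity
  have hs7 : (v - w) ^ 2 ≤ (max v w) ^ (2 * γ + 2) * (v ^ (-γ) - w ^ (-γ)) ^ 2 / γ ^ 2 := by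
    have hΔ : (v ^ (-γ) - w ^ (-γ)) ^ 2
        = γ ^ 2 * (d ^ (-γ - 1) * d ^ (-γ - 1)) * (v - w) ^ 2 := by
      rw [hd3]; ring
    rw [le_div_iff₀ (by positivity : (0:ℝ) < γ ^ 2), hΔ]
    have h5 : γ ^ 2 * (d ^ (-γ - 1) * d ^ (-γ - 1) * d ^ (2 * γ + 2)) * (v - w) ^ 2
        = (v - w) ^ 2 * γ ^ 2 := by rw [htq]; ring
    have key : 0 ≤ (max v w ^ (2 * γ + 2) - d ^ (2 * γ + 2)) *
        (γ ^ 2 * (d ^ (-γ - 1) * d ^ (-γ - 1)) * (v - w) ^ 2) :=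
      mul_nonneg (by linarith) (by positivity)
    linarith only [h5, key]
  -- assemble
  have hP0 : (0:ℝ) ≤ (v ^ (-γ) - w ^ (-γ)) ^ 2 := sq_nonneg _
  have hX0 : (0:ℝ) < w ^ (-γ - 2) + A₁ * r := by positivity
  have hY0 : (0:ℝ) < w ^ (2 * γ + 2) + A₂ * r := by positivity
  have he20 : (0:ℝ) < e ^ (-γ - 2) := by positivity
  have step1 : v ^ (-γ) - w ^ (-γ) + γ * w ^ (-γ - 1) * (v - w) ≤
      γ * (γ + 1) / 2 * ((w ^ (-γ - 2) + A₁ * r) *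
        ((w ^ (2 * γ + 2) + A₂ * r) * (v ^ (-γ) - w ^ (-γ)) ^ 2 / γ ^ 2)) := by
    rw [he3]
    have b1 : e ^ (-γ - 2) ≤ w ^ (-γ - 2) + A₁ * r := heb.trans hlb
    have b2 : (v - w) ^ 2 ≤ (w ^ (2 * γ + 2) + A₂ * r) * (v ^ (-γ) - w ^ (-γ)) ^ 2 / γ ^ 2 := by
      refine hs7.trans ?_
      gcongr
    calc γ * (γ + 1) / 2 * e ^ (-γ - 2) * (v - w) ^ 2
        ≤ γ * (γ + 1) / 2 * (w ^ (-γ - 2) + A₁ * r) *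
          ((w ^ (2 * γ + 2) + A₂ * r) * (v ^ (-γ) - w ^ (-γ)) ^ 2 / γ ^ 2) := by
          gcongr <;> positivity
      _ = γ * (γ + 1) / 2 * ((w ^ (-γ - 2) + A₁ * r) *
          ((w ^ (2 * γ + 2) + A₂ * r) * (v ^ (-γ) - w ^ (-γ)) ^ 2 / γ ^ 2)) := by ring
  have hXY : (w ^ (-γ - 2) + A₁ * r) * (w ^ (2 * γ + 2) + A₂ * r) ≤ w ^ γ + S * r := by
    have hww : w ^ (-γ - 2) * w ^ (2 * γ + 2) = w ^ γ := by
      rw [← Real.rpow_add hw, show (-γ - 2 + (2 * γ + 2) : ℝ) = γ by ring]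
    have b1 : w ^ (-γ - 2) ≤ B₁ := Real.rpow_le_rpow_of_nonpos hw₁ hwgt.le (by linarith)
    have b2 : w ^ (2 * γ + 2) ≤ B₂ := Real.rpow_le_rpow hw.le hwlt.le (by linarith)
    have hr2 : r * r ≤ r := by
      have := mul_le_mul_of_nonneg_left hr1.le hr0.le
      linarith only [this]
    have hwp1 : (0:ℝ) < w ^ (-γ - 2) := by positivity
    have hwp2 : (0:ℝ) < w ^ (2 * γ + 2) := by positivity
    have expand : (w ^ (-γ - 2) + A₁ * r) * (w ^ (2 * γ + 2) + A₂ * r)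
        = w ^ (-γ - 2) * w ^ (2 * γ + 2)
          + (w ^ (-γ - 2) * A₂ + w ^ (2 * γ + 2) * A₁ + A₁ * A₂ * r) * r := by ring
    rw [expand, hww]
    have hbound : w ^ (-γ - 2) * A₂ + w ^ (2 * γ + 2) * A₁ + A₁ * A₂ * r ≤ S := by
      rw [hSdef]
      linarith only [mul_le_mul_of_nonneg_right b1 hA₂0.le,
        mul_le_mul_of_nonneg_right b2 hA₁0.le,
        mul_le_mul_of_nonneg_left hr1.le (mul_pos hA₁0 hA₂0).le]
    linarith only [mul_le_mul_of_nonneg_right hbound hr0.le]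
  have hwinv : 1 / w ^ (-γ) = w ^ γ := by
    rw [Real.rpow_neg hw.le, one_div, inv_inv]
  rw [sq_abs, hwinv]
  calc v ^ (-γ) - w ^ (-γ) + γ * w ^ (-γ - 1) * (v - w)
      ≤ γ * (γ + 1) / 2 * ((w ^ (-γ - 2) + A₁ * r) *
        ((w ^ (2 * γ + 2) + A₂ * r) * (v ^ (-γ) - w ^ (-γ)) ^ 2 / γ ^ 2)) := step1
    _ = (γ + 1) / (2 * γ) * ((w ^ (-γ - 2) + A₁ * r) * (w ^ (2 * γ + 2) + A₂ * r)) *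
        (v ^ (-γ) - w ^ (-γ)) ^ 2 := by field_simp
    _ ≤ (γ + 1) / (2 * γ) * (w ^ γ + S * r) * (v ^ (-γ) - w ^ (-γ)) ^ 2 := by
        gcongr
    _ = ((γ + 1) / (2 * γ) * w ^ γ + (γ + 1) / (2 * γ) * S / m * δ) *
        (v ^ (-γ) - w ^ (-γ)) ^ 2 := by
        rw [hrdef]; field_simp
end

section
/- Fix γ > 1 and v₋ > 0. There exists δ* > 0 such that for every δ with 0 < δ < δ*, and for all v, w > 0 satisfying |p(v) − p(w)| < δ and |p(w) − p(v₋)| < δ, one has Q(v|w) ≥ |p(v) − p(w)|² / (2γ p(w)^{1+1/γ}) − ((1+γ)/(3γ²)) · (p(v) − p(w))³ / p(w)^{2+1/γ}. -/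
open Set

noncomputable def S7g (b t : ℝ) : ℝ :=
  b * (t ^ (1 - b) - 1) / (1 - b) + t ^ (-b) - 1 - b * (t - 1) ^ 2 / 2
    + b * (1 + b) * (t - 1) ^ 3 / 3

noncomputable def S7h1 (b t : ℝ) : ℝ :=
  t ^ (-b) - t ^ (-1 - b) - (t - 1) + (1 + b) * (t - 1) ^ 2

noncomputable def S7h2 (b t : ℝ) : ℝ :=
  -b * t ^ (-b - 1) + (1 + b) * t ^ (-2 - b) - 1 + 2 * (1 + b) * (t - 1)

noncomputable def S7h3 (b t : ℝ) : ℝ :=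
  b * (1 + b) * t ^ (-b - 2) - (1 + b) * (2 + b) * t ^ (-3 - b) + 2 * (1 + b)

lemma S7h3_deriv (b : ℝ) {t : ℝ} (ht : 0 < t) :
    HasDerivAt (S7h3 b) ((1 + b) * (2 + b) * t ^ (-4 - b) * ((3 + b) - b * t)) t := by
  have H := (((Real.hasDerivAt_rpow_const (x := t) (p := -b - 2) (Or.inl ht.ne')).const_mul
      (b * (1 + b))).sub
    ((Real.hasDerivAt_rpow_const (x := t) (p := -3 - b) (Or.inl ht.ne')).const_mul
      ((1 + b) * (2 + b)))).add_const (2 * (1 + b))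
  have hfun : S7h3 b = fun x : ℝ => b * (1 + b) * x ^ (-b - 2)
      - (1 + b) * (2 + b) * x ^ (-3 - b) + 2 * (1 + b) := rfl
  rw [hfun]
  convert H using 1
  · rfl
  · rfl
  · rfl
  rw [show (-b - 2 - 1 : ℝ) = (-4 - b) + 1 by ring, show (-3 - b - 1 : ℝ) = -4 - b by ring,
    Real.rpow_add ht, Real.rpow_one]
  ring

lemma S7h2_deriv (b : ℝ) {t : ℝ} (ht : 0 < t) :
    HasDerivAt (S7h2 b) (S7h3 b t) t := by
  have H := ((((Real.hasDerivAt_rpow_const (x := t) (p := -b - 1) (Or.inl ht.ne')).const_mul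
      (-b)).add
    ((Real.hasDerivAt_rpow_const (x := t) (p := -2 - b) (Or.inl ht.ne')).const_mul
      (1 + b))).sub_const 1).add
    ((((hasDerivAt_id t).sub_const (1:ℝ)).const_mul (2 * (1 + b))))
  have hfun : S7h2 b = fun x : ℝ => (-b * x ^ (-b - 1) + (1 + b) * x ^ (-2 - b) - 1)
      + 2 * (1 + b) * (x - 1) := rfl
  rw [hfun]
  convert H using 1
  · rfl
  · rfl
  · rfl
  rw [show (-b - 1 - 1 : ℝ) = -b - 2 by ring, show (-2 - b - 1 : ℝ) = -3 - b by ring]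
  show S7h3 b t = _
  unfold S7h3
  ring

lemma S7h1_deriv (b : ℝ) {t : ℝ} (ht : 0 < t) :
    HasDerivAt (S7h1 b) (S7h2 b t) t := by
  have H := (((Real.hasDerivAt_rpow_const (x := t) (p := -b) (Or.inl ht.ne')).sub
      (Real.hasDerivAt_rpow_const (x := t) (p := -1 - b) (Or.inl ht.ne'))).sub
      ((hasDerivAt_id t).sub_const (1:ℝ))).add
    ((((hasDerivAt_id t).sub_const (1:ℝ)).pow 2).const_mul (1 + b))
  have hfun : S7h1 b = fun x : ℝ => (x ^ (-b) - x ^ (-1 - b) - (x - 1))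
      + (1 + b) * (x - 1) ^ 2 := rfl
  rw [hfun]
  convert H using 1
  · rfl
  · rfl
  · rfl
  rw [show (-1 - b - 1 : ℝ) = -2 - b by ring]
  show S7h2 b t = _
  unfold S7h2
  push_cast
  simp only [id_eq]
  ring

lemma S7g_deriv (b : ℝ) (hb1 : b < 1) {t : ℝ} (ht : 0 < t) :
    HasDerivAt (S7g b) (b * S7h1 b t) t := by
  have H := (((((((Real.hasDerivAt_rpow_const (x := t) (p := 1 - b)
        (Or.inl ht.ne')).sub_const 1).const_mul b).div_const (1 - b)).add
      (Real.hasDerivAt_rpow_const (x := t) (p := -b) (Or.inl ht.ne'))).sub_const 1).sub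
      (((((hasDerivAt_id t).sub_const (1:ℝ)).pow 2).const_mul b).div_const 2)).add
    (((((hasDerivAt_id t).sub_const (1:ℝ)).pow 3).const_mul (b * (1 + b))).div_const 3)
  have hfun : S7g b = fun x : ℝ => b * (x ^ (1 - b) - 1) / (1 - b) + x ^ (-b) - 1
      - b * (x - 1) ^ 2 / 2 + b * (1 + b) * (x - 1) ^ 3 / 3 := rfl
  rw [hfun]
  convert H using 1
  · rfl
  · rfl
  · rfl
  rw [show (1 - b - 1 : ℝ) = -b by ring]
  have h1b : (1 - b : ℝ) ≠ 0 := by linarith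
  show b * S7h1 b t = _
  unfold S7h1
  push_cast
  simp only [id_eq]
  field_simp
  ring

lemma S7h3_one (b : ℝ) : S7h3 b 1 = 0 := by
  unfold S7h3; rw [Real.one_rpow, Real.one_rpow]; ring

lemma S7h3_sign (b : ℝ) (hb : 0 < b) (hb1 : b < 1) {t : ℝ} (ht : t ∈ Ioo (0:ℝ) 3) :
    (t ≤ 1 → S7h3 b t ≤ 0) ∧ (1 ≤ t → 0 ≤ S7h3 b t) := by
  have h1m : (1:ℝ) ∈ Ioo (0:ℝ) 3 := by norm_num
  have hmono : StrictMonoOn (S7h3 b) (Ioo (0:ℝ) 3) := by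
    apply strictMonoOn_of_deriv_pos (convex_Ioo 0 3)
    · exact fun x hx => (S7h3_deriv b hx.1).continuousAt.continuousWithinAt
    · intro x hx
      rw [interior_Ioo] at hx
      rw [(S7h3_deriv b hx.1).deriv]
      have hpow : (0:ℝ) < x ^ (-4 - b) := Real.rpow_pos_of_pos hx.1 _
      have : b * x < 3 + b := by nlinarith [hx.2]
      have h2b : (0:ℝ) < 2 + b := by linarith
      have h1bp : (0:ℝ) < 1 + b := by linarith
      have : (0:ℝ) < (3 + b) - b * x := by linarith
      positivity
  constructor
  · intro h
    rcases eq_or_lt_of_le h with h | h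
    · rw [h, S7h3_one]
    · have := hmono ht h1m h
      rw [S7h3_one] at this; linarith
  · intro h
    rcases eq_or_lt_of_le h with h | h
    · rw [← h, S7h3_one]
    · have := hmono h1m ht h
      rw [S7h3_one] at this; linarith

lemma S7h2_one (b : ℝ) : S7h2 b 1 = 0 := by
  unfold S7h2; rw [Real.one_rpow, Real.one_rpow]; ring

lemma S7h2_nonneg (b : ℝ) (hb : 0 < b) (hb1 : b < 1) {t : ℝ} (ht : t ∈ Ioo (0:ℝ) 3) :
    0 ≤ S7h2 b t := by
  rcases le_total t 1 with h | h
  · have hanti : AntitoneOn (S7h2 b) (Ioc (0:ℝ) 1) := by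
      apply antitoneOn_of_deriv_nonpos (convex_Ioc 0 1)
      · exact fun x hx => (S7h2_deriv b hx.1).continuousAt.continuousWithinAt
      · intro x hx
        rw [interior_Ioc] at hx
        exact (S7h2_deriv b hx.1).differentiableAt.differentiableWithinAt
      · intro x hx
        rw [interior_Ioc] at hx
        rw [(S7h2_deriv b hx.1).deriv]
        exact (S7h3_sign b hb hb1 ⟨hx.1, by linarith [hx.2]⟩).1 hx.2.le
    have := hanti (mem_Ioc.2 ⟨ht.1, h⟩) (mem_Ioc.2 ⟨one_pos, le_refl 1⟩) h
    rw [S7h2_one] at this; exact this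
  · have hmono : MonotoneOn (S7h2 b) (Ico (1:ℝ) 3) := by
      apply monotoneOn_of_deriv_nonneg (convex_Ico 1 3)
      · exact fun x hx => (S7h2_deriv b (by linarith [hx.1] : (0:ℝ) < x)).continuousAt.continuousWithinAt
      · intro x hx
        rw [interior_Ico] at hx
        exact (S7h2_deriv b (by linarith [hx.1] : (0:ℝ) < x)).differentiableAt.differentiableWithinAt
      · intro x hx
        rw [interior_Ico] at hx
        rw [(S7h2_deriv b (by linarith [hx.1] : (0:ℝ) < x)).deriv]
        exact (S7h3_sign b hb hb1 ⟨by linarith [hx.1], hx.2⟩).2 hx.1.le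
    have := hmono (mem_Ico.2 ⟨le_refl 1, by norm_num⟩) (mem_Ico.2 ⟨h, ht.2⟩) h
    rw [S7h2_one] at this; exact this

lemma S7h1_one (b : ℝ) : S7h1 b 1 = 0 := by
  unfold S7h1; rw [Real.one_rpow, Real.one_rpow]; ring

lemma S7h1_sign (b : ℝ) (hb : 0 < b) (hb1 : b < 1) {t : ℝ} (ht : t ∈ Ioo (0:ℝ) 3) :
    (t ≤ 1 → S7h1 b t ≤ 0) ∧ (1 ≤ t → 0 ≤ S7h1 b t) := by
  have h1m : (1:ℝ) ∈ Ioo (0:ℝ) 3 := by norm_num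
  have hmono : MonotoneOn (S7h1 b) (Ioo (0:ℝ) 3) := by
    apply monotoneOn_of_deriv_nonneg (convex_Ioo 0 3)
    · exact fun x hx => (S7h1_deriv b hx.1).continuousAt.continuousWithinAt
    · intro x hx
      rw [interior_Ioo] at hx
      exact (S7h1_deriv b hx.1).differentiableAt.differentiableWithinAt
    · intro x hx
      rw [interior_Ioo] at hx
      rw [(S7h1_deriv b hx.1).deriv]
      exact S7h2_nonneg b hb hb1 hx
  constructor
  · intro h
    have := hmono ht h1m h; rw [S7h1_one] at this; exact this
  · intro h
    have := hmono h1m ht h; rw [S7h1_one] at this; exact this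

lemma S7g_one (b : ℝ) : S7g b 1 = 0 := by
  unfold S7g; rw [Real.one_rpow, Real.one_rpow]; ring

lemma S7g_nonneg (b : ℝ) (hb : 0 < b) (hb1 : b < 1) {t : ℝ} (ht : t ∈ Ioo (0:ℝ) 3) :
    0 ≤ S7g b t := by
  rcases le_total t 1 with h | h
  · have hanti : AntitoneOn (S7g b) (Ioc (0:ℝ) 1) := by
      apply antitoneOn_of_deriv_nonpos (convex_Ioc 0 1)
      · exact fun x hx => (S7g_deriv b hb1 hx.1).continuousAt.continuousWithinAt
      · intro x hx
        rw [interior_Ioc] at hx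
        exact (S7g_deriv b hb1 hx.1).differentiableAt.differentiableWithinAt
      · intro x hx
        rw [interior_Ioc] at hx
        rw [(S7g_deriv b hb1 hx.1).deriv]
        have := (S7h1_sign b hb hb1 ⟨hx.1, by linarith [hx.2]⟩).1 hx.2.le
        exact mul_nonpos_of_nonneg_of_nonpos hb.le this
    have := hanti (mem_Ioc.2 ⟨ht.1, h⟩) (mem_Ioc.2 ⟨one_pos, le_refl 1⟩) h
    rw [S7g_one] at this; exact this
  · have hmono : MonotoneOn (S7g b) (Ico (1:ℝ) 3) := by
      apply monotoneOn_of_deriv_nonneg (convex_Ico 1 3)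
      · exact fun x hx => (S7g_deriv b hb1 (by linarith [hx.1] : (0:ℝ) < x)).continuousAt.continuousWithinAt
      · intro x hx
        rw [interior_Ico] at hx
        exact (S7g_deriv b hb1 (by linarith [hx.1] : (0:ℝ) < x)).differentiableAt.differentiableWithinAt
      · intro x hx
        rw [interior_Ico] at hx
        rw [(S7g_deriv b hb1 (by linarith [hx.1] : (0:ℝ) < x)).deriv]
        have := (S7h1_sign b hb hb1 ⟨by linarith [hx.1], hx.2⟩).2 hx.1.le
        exact mul_nonneg hb.le this
    have := hmono (mem_Ico.2 ⟨le_refl 1, by norm_num⟩) (mem_Ico.2 ⟨h, ht.2⟩) h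
    rw [S7g_one] at this; exact this

lemma S7key (γ : ℝ) (hγ : 1 < γ) {p q : ℝ} (hp : 0 < p) (hq : 0 < q) (hpq : p < 3 * q) :
    (p ^ (1 - 1/γ) - q ^ (1 - 1/γ)) / (γ - 1) + q * (p ^ (-(1/γ)) - q ^ (-(1/γ))) ≥
      (p - q) ^ 2 / (2 * γ * q ^ (1 + 1/γ)) - (1 + γ) / (3 * γ ^ 2) * (p - q) ^ 3 / q ^ (2 + 1/γ) := by
  have hγ0 : (0:ℝ) < γ := by linarith
  have hb : (0:ℝ) < 1/γ := by positivity
  have hb1 : 1/γ < 1 := by rw [div_lt_one hγ0]; linarith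
  set t := p / q with htdef
  have ht : t ∈ Ioo (0:ℝ) 3 := ⟨div_pos hp hq, (div_lt_iff₀ hq).2 (by linarith)⟩
  have hg := S7g_nonneg (1/γ) hb hb1 ht
  have hqpow : (0:ℝ) < q ^ (1 - 1/γ) := Real.rpow_pos_of_pos hq _
  have hpt : p = q * t := by rw [htdef]; field_simp
  have key : (p ^ (1 - 1/γ) - q ^ (1 - 1/γ)) / (γ - 1) + q * (p ^ (-(1/γ)) - q ^ (-(1/γ)))
      - ((p - q) ^ 2 / (2 * γ * q ^ (1 + 1/γ)) - (1 + γ) / (3 * γ ^ 2) * (p - q) ^ 3 / q ^ (2 + 1/γ))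
      = q ^ (1 - 1/γ) * S7g (1/γ) t := by
    rw [hpt, Real.mul_rpow hq.le ht.1.le, Real.mul_rpow hq.le ht.1.le]
    have eq1 : q ^ ((1:ℝ) - 1/γ) = q * (q ^ (1/γ))⁻¹ := by
      rw [show (1:ℝ) - 1/γ = 1 + (-(1/γ)) by ring, Real.rpow_add hq, Real.rpow_one,
        Real.rpow_neg hq.le]
    have eq2 : q ^ ((1:ℝ) + 1/γ) = q * q ^ (1/γ) := by
      rw [Real.rpow_add hq, Real.rpow_one]
    have eq3 : q ^ ((2:ℝ) + 1/γ) = q * q * q ^ (1/γ) := by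
      rw [show (2:ℝ) + 1/γ = 1 + (1 + 1/γ) by ring, Real.rpow_add hq, Real.rpow_add hq,
        Real.rpow_one]; ring
    have eq4 : q ^ (-(1/γ)) = (q ^ (1/γ))⁻¹ := Real.rpow_neg hq.le _
    have eq5 : t ^ ((1:ℝ) - 1/γ) = t * (t ^ (1/γ))⁻¹ := by
      rw [show (1:ℝ) - 1/γ = 1 + (-(1/γ)) by ring, Real.rpow_add ht.1, Real.rpow_one,
        Real.rpow_neg ht.1.le]
    have eq6 : t ^ (-(1/γ)) = (t ^ (1/γ))⁻¹ := Real.rpow_neg ht.1.le _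
    have hA : (0:ℝ) < q ^ (1/γ) := Real.rpow_pos_of_pos hq _
    have hB : (0:ℝ) < t ^ (1/γ) := Real.rpow_pos_of_pos ht.1 _
    unfold S7g
    rw [eq1, eq2, eq3, eq4, eq5, eq6]
    have hγ1 : γ - 1 ≠ 0 := by linarith
    have h1b : 1 - 1/γ ≠ 0 := by linarith
    field_simp
    ring
  nlinarith [mul_nonneg hqpow.le hg]

/- STATEMENT 7: For γ > 1 and v₋ > 0 (denoted vm), there is δ* > 0 such that for all
0 < δ < δ*, and all v, w > 0 with |p(v) − p(w)| < δ and |p(w) − p(v₋)| < δ,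
Q(v|w) ≥ |p(v) − p(w)|²/(2γ p(w)^(1+1/γ)) − ((1+γ)/(3γ²))·(p(v) − p(w))³/p(w)^(2+1/γ),
where p(v) = v^(−γ) and Q(v|w) = (v^(1−γ) − w^(1−γ))/(γ−1) + w^(−γ)(v−w). -/
theorem stmt7 (γ vm : ℝ) (hγ : 1 < γ) (hvm : 0 < vm) :
    ∃ δstar > (0:ℝ), ∀ δ : ℝ, 0 < δ → δ < δstar →
      ∀ v w : ℝ, 0 < v → 0 < w →
        |v ^ (-γ) - w ^ (-γ)| < δ → |w ^ (-γ) - vm ^ (-γ)| < δ →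
        (v ^ (1 - γ) - w ^ (1 - γ)) / (γ - 1) + w ^ (-γ) * (v - w) ≥
          |v ^ (-γ) - w ^ (-γ)| ^ 2 / (2 * γ * (w ^ (-γ)) ^ (1 + 1 / γ)) -
          (1 + γ) / (3 * γ ^ 2) * (v ^ (-γ) - w ^ (-γ)) ^ 3 / (w ^ (-γ)) ^ (2 + 1 / γ) := by
  have hγ0 : (0:ℝ) < γ := by linarith
  have hpm : (0:ℝ) < vm ^ (-γ) := Real.rpow_pos_of_pos hvm _
  refine ⟨vm ^ (-γ) / 2, by positivity, ?_⟩
  intro δ hδ0 hδs v w hv hw h1 h2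
  have hp : (0:ℝ) < v ^ (-γ) := Real.rpow_pos_of_pos hv _
  have hq : (0:ℝ) < w ^ (-γ) := Real.rpow_pos_of_pos hw _
  rw [abs_lt] at h1 h2
  have hδq : δ < w ^ (-γ) := by linarith [h2.1]
  have hp3 : v ^ (-γ) < 3 * w ^ (-γ) := by linarith [h1.2]
  have ev1 : v ^ (1 - γ) = (v ^ (-γ)) ^ (1 - 1/γ) := by
    rw [← Real.rpow_mul hv.le]
    congr 1
    field_simp
    ring
  have ew1 : w ^ (1 - γ) = (w ^ (-γ)) ^ (1 - 1/γ) := by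
    rw [← Real.rpow_mul hw.le]
    congr 1
    field_simp
    ring
  have ev2 : v = (v ^ (-γ)) ^ (-(1/γ)) := by
    rw [← Real.rpow_mul hv.le]
    rw [show -γ * -(1/γ) = 1 by field_simp, Real.rpow_one]
  have ew2 : w = (w ^ (-γ)) ^ (-(1/γ)) := by
    rw [← Real.rpow_mul hw.le]
    rw [show -γ * -(1/γ) = 1 by field_simp, Real.rpow_one]
  rw [sq_abs]
  calc (v ^ (1 - γ) - w ^ (1 - γ)) / (γ - 1) + w ^ (-γ) * (v - w)
      = ((v ^ (-γ)) ^ (1 - 1/γ) - (w ^ (-γ)) ^ (1 - 1/γ)) / (γ - 1)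
        + w ^ (-γ) * ((v ^ (-γ)) ^ (-(1/γ)) - (w ^ (-γ)) ^ (-(1/γ))) := by
        rw [← ev1, ← ew1, ← ev2, ← ew2]
    _ ≥ _ := S7key γ hγ hp hq hp3
end

section
/- Fix γ > 1 and v₋ > 0. There exist constants C > 0 and δ* > 0 such that for every δ with 0 < δ < δ*, and for all v, w > 0 satisfying |p(v) − p(w)| < δ and |p(w) − p(v₋)| < δ, one has Q(v|w) ≤ ( 1/(2γ p(w)^{1+1/γ}) + Cδ ) · |p(v) − p(w)|². -/
set_option maxHeartbeats 1000000

open Set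

/-- Comparison lemma: if f(q)=0, f'(q)=0 and f'' ≤ M on the segment between p and q,
then f(p) ≤ M/2 (p-q)^2. -/
lemma taylor2_upper (f f' f'' : ℝ → ℝ) (p q M : ℝ)
    (hd1 : ∀ x ∈ Set.uIcc p q, HasDerivAt f (f' x) x)
    (hd2 : ∀ x ∈ Set.uIcc p q, HasDerivAt f' (f'' x) x)
    (hfq : f q = 0) (hf'q : f' q = 0)
    (hM : ∀ x ∈ Set.uIcc p q, f'' x ≤ M) :
    f p ≤ M / 2 * (p - q) ^ 2 := by
  set g : ℝ → ℝ := fun x => M / 2 * (x - q) ^ 2 - f x with hgdef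
  set g' : ℝ → ℝ := fun x => M * (x - q) - f' x with hg'def
  have hgd : ∀ x ∈ Set.uIcc p q, HasDerivAt g (g' x) x := by
    intro x hx
    have h2 : HasDerivAt (fun y : ℝ => (y - q) ^ 2) (2 * (x - q)) x := by
      simpa using ((hasDerivAt_id x).sub_const q).fun_pow 2
    have h1 := h2.const_mul (M / 2)
    have := h1.fun_sub (hd1 x hx)
    refine this.congr_deriv ?_
    simp [hg'def]; ring
  have hg'd : ∀ x ∈ Set.uIcc p q, HasDerivAt g' (M - f'' x) x := by
    intro x hx
    have h1 : HasDerivAt (fun y : ℝ => M * (y - q)) M x := by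
      simpa using ((hasDerivAt_id x).sub_const q).const_mul M
    simpa [hg'def] using h1.fun_sub (hd2 x hx)
  have hmono : MonotoneOn g' (Set.uIcc p q) := by
    apply monotoneOn_of_deriv_nonneg (convex_uIcc p q)
    · exact fun x hx => (hg'd x hx).continuousAt.continuousWithinAt
    · exact fun x hx => ((hg'd x (interior_subset hx)).differentiableAt).differentiableWithinAt
    · intro x hx
      rw [(hg'd x (interior_subset hx)).deriv]
      have := hM x (interior_subset hx); linarith
  have hg'q : g' q = 0 := by simp [hg'def, hf'q]
  have hgq : g q = 0 := by simp [hgdef, hfq]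
  have hqm : q ∈ Set.uIcc p q := Set.right_mem_uIcc
  have key : 0 ≤ g p := by
    rcases le_total q p with h | h
    · have huIcc : Set.uIcc p q = Set.Icc q p := by rw [Set.uIcc_comm]; exact Set.uIcc_of_le h
      have hgm : MonotoneOn g (Set.Icc q p) := by
        apply monotoneOn_of_deriv_nonneg (convex_Icc q p)
        · intro x hx; rw [← huIcc] at hx
          exact (hgd x hx).continuousAt.continuousWithinAt
        · intro x hx; rw [interior_Icc] at hx
          have hx' : x ∈ Set.uIcc p q := by rw [huIcc]; exact Set.Ioo_subset_Icc_self hx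
          exact (hgd x hx').differentiableAt.differentiableWithinAt
        · intro x hx; rw [interior_Icc] at hx
          have hx' : x ∈ Set.uIcc p q := by rw [huIcc]; exact Set.Ioo_subset_Icc_self hx
          rw [(hgd x hx').deriv, ← hg'q]
          exact hmono hqm hx' (le_of_lt hx.1)
      have := hgm (Set.left_mem_Icc.2 h) (Set.right_mem_Icc.2 h) h
      rw [hgq] at this; exact this
    · have huIcc : Set.uIcc p q = Set.Icc p q := Set.uIcc_of_le h
      have hgm : AntitoneOn g (Set.Icc p q) := by
        apply antitoneOn_of_deriv_nonpos (convex_Icc p q)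
        · intro x hx; rw [← huIcc] at hx
          exact (hgd x hx).continuousAt.continuousWithinAt
        · intro x hx; rw [interior_Icc] at hx
          have hx' : x ∈ Set.uIcc p q := by rw [huIcc]; exact Set.Ioo_subset_Icc_self hx
          exact (hgd x hx').differentiableAt.differentiableWithinAt
        · intro x hx; rw [interior_Icc] at hx
          have hx' : x ∈ Set.uIcc p q := by rw [huIcc]; exact Set.Ioo_subset_Icc_self hx
          rw [(hgd x hx').deriv, ← hg'q]
          exact hmono hx' hqm (le_of_lt hx.2)
      have := hgm (Set.left_mem_Icc.2 h) (Set.right_mem_Icc.2 h) h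
      rw [hgq] at this; exact this
  have : f p ≤ M / 2 * (p - q) ^ 2 := by
    have := key; simp only [hgdef] at this; linarith
  exact this

/-- Lipschitz bound for x ↦ x^(-s) on [m, ∞). -/
lemma rpow_neg_lip (s m : ℝ) (hs : 0 < s) (hm : 0 < m) {x y : ℝ} (hx : m ≤ x) (hy : m ≤ y) :
    |x ^ (-s) - y ^ (-s)| ≤ s * m ^ (-s - 1) * |x - y| := by
  have key := Convex.norm_image_sub_le_of_norm_hasDerivWithin_le
    (f := fun t : ℝ => t ^ (-s)) (f' := fun t : ℝ => (-s) * t ^ (-s - 1))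
    (s := Set.Ici m) (C := s * m ^ (-s - 1))
    (fun t ht => (Real.hasDerivAt_rpow_const (Or.inl (hm.trans_le ht).ne')).hasDerivWithinAt)
    (fun t ht => by
      have ht' : (0:ℝ) < t := hm.trans_le ht
      have h1 : t ^ (-s - 1) ≤ m ^ (-s - 1) :=
        Real.rpow_le_rpow_of_nonpos hm ht (by linarith)
      have h2 : (0:ℝ) ≤ t ^ (-s - 1) := (Real.rpow_pos_of_pos ht' _).le
      rw [Real.norm_eq_abs, abs_mul, abs_neg, abs_of_pos hs, abs_of_nonneg h2]
      exact mul_le_mul_of_nonneg_left h1 hs.le)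
    (convex_Ici m) hy hx
  simpa [Real.norm_eq_abs, abs_sub_comm] using key

theorem stmt8 (γ vm : ℝ) (hγ : 1 < γ) (hvm : 0 < vm) :
    ∃ C > (0:ℝ), ∃ δstar > (0:ℝ), ∀ δ : ℝ, 0 < δ → δ < δstar →
      ∀ v w : ℝ, 0 < v → 0 < w →
        |v ^ (-γ) - w ^ (-γ)| < δ → |w ^ (-γ) - vm ^ (-γ)| < δ →
        (v ^ (1 - γ) - w ^ (1 - γ)) / (γ - 1) + w ^ (-γ) * (v - w) ≤
          (1 / (2 * γ * (w ^ (-γ)) ^ (1 + 1 / γ)) + C * δ) * |v ^ (-γ) - w ^ (-γ)| ^ 2 := by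
  have hγ0 : (0:ℝ) < γ := by linarith
  have hγ1 : γ - 1 ≠ 0 := by intro h; linarith [sub_eq_zero.1 h]
  have hγne : γ ≠ 0 := hγ0.ne'
  set P : ℝ := vm ^ (-γ) with hPdef
  have hP : 0 < P := Real.rpow_pos_of_pos hvm _
  set m : ℝ := P / 2 with hmdef
  have hm : 0 < m := by positivity
  have hγ2 : (0:ℝ) < γ ^ 2 := pow_pos hγ0 2
  have hinvγ : (0:ℝ) < 1 / γ := by positivity
  have hmr1 : 0 < m ^ (-(1/γ+1) - 1) := Real.rpow_pos_of_pos hm _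
  have hmr2 : 0 < m ^ (-(1/γ+2) - 1) := Real.rpow_pos_of_pos hm _
  set L : ℝ := (1/γ^2) * ((1/γ+1) * m ^ (-(1/γ+1) - 1))
      + (2*P*(γ+1)/γ^2) * ((1/γ+2) * m ^ (-(1/γ+2) - 1)) with hLdef
  have hL : 0 < L := by
    apply add_pos
    · exact mul_pos (by positivity) (mul_pos (by positivity) hmr1)
    · exact mul_pos (div_pos (by nlinarith) hγ2) (mul_pos (by positivity) hmr2)
  refine ⟨L/2, by positivity, P/4, by positivity, ?_⟩
  intro δ hδ hδP v w hv hw hpq hqP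
  set p : ℝ := v ^ (-γ) with hpdef
  set q : ℝ := w ^ (-γ) with hqdef
  have hp : 0 < p := Real.rpow_pos_of_pos hv _
  have hq : 0 < q := Real.rpow_pos_of_pos hw _
  have hpq' := abs_lt.1 hpq
  have hqP' := abs_lt.1 hqP
  have hqlb : m < q := by rw [hmdef]; linarith
  have hqub : q ≤ 2 * P := by linarith
  have hplb : m < p := by rw [hmdef]; linarith
  set F : ℝ → ℝ := fun x => (x ^ (1 - 1/γ) - q ^ (1 - 1/γ)) / (γ - 1)
      + q * (x ^ (-(1/γ)) - q ^ (-(1/γ))) with hFdef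
  set F' : ℝ → ℝ := fun x => (1/γ) * x ^ (-(1/γ)) - (q/γ) * x ^ (-(1/γ+1)) with hF'def
  set F'' : ℝ → ℝ := fun x => -(1/γ^2) * x ^ (-(1/γ+1))
      + (q*(γ+1)/γ^2) * x ^ (-(1/γ+2)) with hF''def
  have hd1 : ∀ x ∈ Set.uIcc p q, HasDerivAt F (F' x) x := by
    intro x hx
    have hx0 : 0 < x := by
      rcases Set.mem_uIcc.1 hx with ⟨h1, _⟩ | ⟨h1, _⟩ <;> linarith
    have A := Real.hasDerivAt_rpow_const (x := x) (p := 1 - 1/γ) (Or.inl hx0.ne')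
    have B := Real.hasDerivAt_rpow_const (x := x) (p := -(1/γ)) (Or.inl hx0.ne')
    have h := ((A.sub_const (q ^ (1 - 1/γ))).div_const (γ - 1)).fun_add
      ((B.sub_const (q ^ (-(1/γ)))).const_mul q)
    refine h.congr_deriv ?_
    rw [show (1 - 1/γ - 1 : ℝ) = -(1/γ) by ring, show (-(1/γ) - 1 : ℝ) = -(1/γ+1) by ring]
    rw [hF'def]
    field_simp
    ring
  have hd2 : ∀ x ∈ Set.uIcc p q, HasDerivAt F' (F'' x) x := by
    intro x hx
    have hx0 : 0 < x := by
      rcases Set.mem_uIcc.1 hx with ⟨h1, _⟩ | ⟨h1, _⟩ <;> linarith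
    have A := Real.hasDerivAt_rpow_const (x := x) (p := -(1/γ)) (Or.inl hx0.ne')
    have B := Real.hasDerivAt_rpow_const (x := x) (p := -(1/γ+1)) (Or.inl hx0.ne')
    have h := (A.const_mul (1/γ)).fun_sub (B.const_mul (q/γ))
    refine h.congr_deriv ?_
    rw [show (-(1/γ) - 1 : ℝ) = -(1/γ+1) by ring, show (-(1/γ+1) - 1 : ℝ) = -(1/γ+2) by ring]
    rw [hF''def]
    field_simp
    ring
  have hqe1 : q * q ^ (-(1/γ+1)) = q ^ (-(1/γ)) := by
    rw [show (-(1/γ) : ℝ) = 1 + (-(1/γ+1)) by ring, Real.rpow_add hq, Real.rpow_one]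
  have hqe2 : q * q ^ (-(1/γ+2)) = q ^ (-(1/γ+1)) := by
    rw [show (-(1/γ+1) : ℝ) = 1 + (-(1/γ+2)) by ring, Real.rpow_add hq, Real.rpow_one]
  have hFq : F q = 0 := by rw [hFdef]; simp
  have hF'q : F' q = 0 := by
    rw [hF'def]; simp only
    rw [← hqe1]; ring
  have hF''q : F'' q = (1/γ) * q ^ (-(1/γ+1)) := by
    rw [hF''def]; simp only
    rw [← hqe2]; field_simp; ring
  set M : ℝ := (1/γ) * q ^ (-(1/γ+1)) + L * δ with hMdef
  have hbound : ∀ x ∈ Set.uIcc p q, F'' x ≤ M := by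
    intro x hx
    have hxm : m ≤ x := by
      rcases Set.mem_uIcc.1 hx with ⟨h1, _⟩ | ⟨h1, _⟩ <;> linarith
    have hxqδ : |x - q| ≤ δ := by
      have h1 := le_abs_self (p - q)
      have h2 := neg_abs_le (p - q)
      have h3 : |x - q| ≤ |p - q| := by
        rw [abs_le]
        rcases Set.mem_uIcc.1 hx with ⟨ha, hb⟩ | ⟨ha, hb⟩ <;> constructor <;> linarith
      linarith
    have t1 : |x ^ (-(1/γ+1)) - q ^ (-(1/γ+1))| ≤ ((1/γ+1) * m ^ (-(1/γ+1) - 1)) * δ :=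
      calc |x ^ (-(1/γ+1)) - q ^ (-(1/γ+1))|
          ≤ (1/γ+1) * m ^ (-(1/γ+1) - 1) * |x - q| :=
            rpow_neg_lip (1/γ+1) m (by positivity) hm hxm hqlb.le
        _ ≤ ((1/γ+1) * m ^ (-(1/γ+1) - 1)) * δ :=
            mul_le_mul_of_nonneg_left hxqδ (by positivity)
    have t2 : |x ^ (-(1/γ+2)) - q ^ (-(1/γ+2))| ≤ ((1/γ+2) * m ^ (-(1/γ+2) - 1)) * δ :=
      calc |x ^ (-(1/γ+2)) - q ^ (-(1/γ+2))|
          ≤ (1/γ+2) * m ^ (-(1/γ+2) - 1) * |x - q| :=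
            rpow_neg_lip (1/γ+2) m (by positivity) hm hxm hqlb.le
        _ ≤ ((1/γ+2) * m ^ (-(1/γ+2) - 1)) * δ :=
            mul_le_mul_of_nonneg_left hxqδ (by positivity)
    have hq2 : 0 < q * (γ+1) / γ^2 := div_pos (by nlinarith) hγ2
    have hpos1 : (0:ℝ) < 1/γ^2 := by positivity
    have h1 : -(1/γ^2) * (x ^ (-(1/γ+1)) - q ^ (-(1/γ+1)))
        ≤ (1/γ^2) * (((1/γ+1) * m ^ (-(1/γ+1) - 1)) * δ) := by
      have ha := mul_le_mul_of_nonneg_left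
        (neg_le_abs (x ^ (-(1/γ+1)) - q ^ (-(1/γ+1)))) hpos1.le
      have hb := mul_le_mul_of_nonneg_left t1 hpos1.le
      nlinarith
    have h2 : (q*(γ+1)/γ^2) * (x ^ (-(1/γ+2)) - q ^ (-(1/γ+2)))
        ≤ (2*P*(γ+1)/γ^2) * (((1/γ+2) * m ^ (-(1/γ+2) - 1)) * δ) := by
      have hcoef : q*(γ+1)/γ^2 ≤ 2*P*(γ+1)/γ^2 :=
        (div_le_div_iff_of_pos_right hγ2).2 (by nlinarith)
      calc (q*(γ+1)/γ^2) * (x ^ (-(1/γ+2)) - q ^ (-(1/γ+2)))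
          ≤ (q*(γ+1)/γ^2) * |x ^ (-(1/γ+2)) - q ^ (-(1/γ+2))| :=
            mul_le_mul_of_nonneg_left (le_abs_self _) hq2.le
        _ ≤ (q*(γ+1)/γ^2) * (((1/γ+2) * m ^ (-(1/γ+2) - 1)) * δ) :=
            mul_le_mul_of_nonneg_left t2 hq2.le
        _ ≤ (2*P*(γ+1)/γ^2) * (((1/γ+2) * m ^ (-(1/γ+2) - 1)) * δ) :=
            mul_le_mul_of_nonneg_right hcoef (by positivity)
    have hkey : F'' x - F'' q = -(1/γ^2) * (x ^ (-(1/γ+1)) - q ^ (-(1/γ+1)))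
        + (q*(γ+1)/γ^2) * (x ^ (-(1/γ+2)) - q ^ (-(1/γ+2))) := by
      rw [hF''def]; simp only; ring
    have hLδ : L * δ = (1/γ^2) * (((1/γ+1) * m ^ (-(1/γ+1) - 1)) * δ)
        + (2*P*(γ+1)/γ^2) * (((1/γ+2) * m ^ (-(1/γ+2) - 1)) * δ) := by
      rw [hLdef]; ring
    rw [hMdef]
    linarith [hF''q]
  have key := taylor2_upper F F' F'' p q M hd1 hd2 hFq hF'q hbound
  -- convert to the stated form
  have hvp1 : p ^ (1 - 1/γ) = v ^ (1 - γ) := by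
    rw [hpdef, ← Real.rpow_mul hv.le, show (-γ * (1 - 1/γ) : ℝ) = 1 - γ by field_simp; ring]
  have hvp2 : p ^ (-(1/γ)) = v := by
    rw [hpdef, ← Real.rpow_mul hv.le, show (-γ * -(1/γ) : ℝ) = 1 by field_simp, Real.rpow_one]
  have hwq1 : q ^ (1 - 1/γ) = w ^ (1 - γ) := by
    rw [hqdef, ← Real.rpow_mul hw.le, show (-γ * (1 - 1/γ) : ℝ) = 1 - γ by field_simp; ring]
  have hwq2 : q ^ (-(1/γ)) = w := by
    rw [hqdef, ← Real.rpow_mul hw.le, show (-γ * -(1/γ) : ℝ) = 1 by field_simp, Real.rpow_one]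
  have hFp : F p = (v ^ (1 - γ) - w ^ (1 - γ)) / (γ - 1) + q * (v - w) := by
    rw [hFdef]; simp only; rw [hvp1, hvp2, hwq1, hwq2]
  have hZ : q ^ (-(1/γ+1)) = (q ^ (1 + 1/γ))⁻¹ := by
    rw [show (-(1/γ+1) : ℝ) = -(1 + 1/γ) by ring, Real.rpow_neg hq.le]
  have hZ0 : q ^ (1 + 1/γ) ≠ 0 := (Real.rpow_pos_of_pos hq _).ne'
  have hfinal : M / 2 * (p - q) ^ 2
      = (1 / (2 * γ * q ^ (1 + 1/γ)) + L/2 * δ) * |p - q| ^ 2 := by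
    rw [sq_abs, hMdef, hZ]
    field_simp
  rw [← hFp, ← hfinal]
  exact key
end

section
/- Fix γ > 1 and v₋ > 0. There exist constants C > 0 and δ₀ > 0 such that for every v₊ > v₋ with 0 < δ := p(v₋) − p(v₊) ≤ δ₀, and for every v with v₋ < v < v₊, one has | (v − v₋)/(p(v) − p(v₋)) + (v − v₊)/(p(v₊) − p(v)) + (1/2) · p''(v₋)/(p'(v₋))² · (v₋ − v₊) | ≤ C δ². -/
open Real Set

private lemma lipOn9 {f f' : ℝ → ℝ} {a b K : ℝ}
    (hd : ∀ x ∈ Set.Icc a b, HasDerivAt f (f' x) x)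
    (hK : ∀ x ∈ Set.Icc a b, |f' x| ≤ K) :
    ∀ x ∈ Set.Icc a b, ∀ y ∈ Set.Icc a b, |f y - f x| ≤ K * |y - x| := by
  intro x hx y hy
  have := Convex.norm_image_sub_le_of_norm_hasDerivWithin_le
    (f := f) (f' := f') (s := Set.Icc a b)
    (fun z hz => (hd z hz).hasDerivWithinAt) (fun z hz => hK z hz) (convex_Icc a b) hx hy
  simpa [Real.norm_eq_abs] using this

/-- Second order Taylor remainder of `t ↦ t^α` at `b`. -/
noncomputable def Rfun9 (α b : ℝ) : ℝ → ℝ := fun t =>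
  t ^ α - b ^ α - (α * b ^ (α - 1)) * (t - b) - (α * (α - 1) * b ^ (α - 2)) * (t - b) ^ 2 / 2

private lemma Rfun9_self (α b : ℝ) : Rfun9 α b b = 0 := by simp [Rfun9]

private lemma Rlip9 (α a b M : ℝ) (ha : 0 < a) (hab : a ≤ b)
    (hM : ∀ x ∈ Set.Icc a b, |α * (α - 1) * (α - 2) * x ^ (α - 3)| ≤ M) :
    ∀ x ∈ Set.Icc a b, ∀ y ∈ Set.Icc a b,
      |Rfun9 α b y - Rfun9 α b x| ≤ (M * (b - a) * (b - a)) * |y - x| := by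
  have hpos : ∀ x ∈ Set.Icc a b, (0:ℝ) < x := fun x hx => ha.trans_le hx.1
  have hbmem : b ∈ Set.Icc a b := ⟨hab, le_refl b⟩
  have hM0 : 0 ≤ M := le_trans (abs_nonneg _) (hM b hbmem)
  -- derivative of V2
  have d2 : ∀ x ∈ Set.Icc a b,
      HasDerivAt (fun t : ℝ => α * (α - 1) * t ^ (α - 2))
        (α * (α - 1) * (α - 2) * x ^ (α - 3)) x := by
    intro x hx
    have h := (Real.hasDerivAt_rpow_const (x := x) (p := α - 2)
      (Or.inl (hpos x hx).ne')).const_mul (α * (α - 1))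
    have h2 : α * (α - 1) * ((α - 2) * x ^ (α - 2 - 1))
        = α * (α - 1) * (α - 2) * x ^ (α - 3) := by
      rw [show α - 2 - 1 = α - 3 by ring]; ring
    exact h2 ▸ h
  have s2 := lipOn9 d2 hM
  -- bound for V2 x - V2 b on the interval
  have bound1 : ∀ x ∈ Set.Icc a b,
      |α * (α - 1) * x ^ (α - 2) - α * (α - 1) * b ^ (α - 2)| ≤ M * (b - a) := by
    intro x hx
    have h := s2 b hbmem x hx
    have hxb : |x - b| ≤ b - a := by
      rw [abs_of_nonpos (by linarith [hx.2])]; linarith [hx.1]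
    calc |α * (α - 1) * x ^ (α - 2) - α * (α - 1) * b ^ (α - 2)| ≤ M * |x - b| := h
      _ ≤ M * (b - a) := by exact mul_le_mul_of_nonneg_left hxb hM0
  -- derivative of R1
  have d1 : ∀ x ∈ Set.Icc a b,
      HasDerivAt (fun t : ℝ => α * t ^ (α - 1) - α * b ^ (α - 1)
        - (α * (α - 1) * b ^ (α - 2)) * (t - b))
        (α * (α - 1) * x ^ (α - 2) - α * (α - 1) * b ^ (α - 2)) x := by
    intro x hx
    have h := (((Real.hasDerivAt_rpow_const (x := x) (p := α - 1)
      (Or.inl (hpos x hx).ne')).const_mul α).sub_const (α * b ^ (α - 1))).sub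
      (((hasDerivAt_id x).sub_const b).const_mul (α * (α - 1) * b ^ (α - 2)))
    have h2 : α * ((α - 1) * x ^ (α - 1 - 1)) - α * (α - 1) * b ^ (α - 2) * 1
        = α * (α - 1) * x ^ (α - 2) - α * (α - 1) * b ^ (α - 2) := by
      rw [show α - 1 - 1 = α - 2 by ring]; ring
    exact h2 ▸ h
  have s1 := lipOn9 d1 bound1
  -- bound for R1 on the interval
  have bound0 : ∀ x ∈ Set.Icc a b,
      |α * x ^ (α - 1) - α * b ^ (α - 1) - (α * (α - 1) * b ^ (α - 2)) * (x - b)|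
        ≤ M * (b - a) * (b - a) := by
    intro x hx
    have h := s1 b hbmem x hx
    have hxb : |x - b| ≤ b - a := by
      rw [abs_of_nonpos (by linarith [hx.2])]; linarith [hx.1]
    have h0 : (α * b ^ (α - 1) - α * b ^ (α - 1)
        - (α * (α - 1) * b ^ (α - 2)) * (b - b)) = 0 := by ring
    rw [h0, sub_zero] at h
    calc |α * x ^ (α - 1) - α * b ^ (α - 1) - (α * (α - 1) * b ^ (α - 2)) * (x - b)|
        ≤ M * (b - a) * |x - b| := h
      _ ≤ M * (b - a) * (b - a) := by
          exact mul_le_mul_of_nonneg_left hxb (mul_nonneg hM0 (by linarith))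
  -- derivative of R
  have d0 : ∀ x ∈ Set.Icc a b,
      HasDerivAt (Rfun9 α b)
        (α * x ^ (α - 1) - α * b ^ (α - 1) - (α * (α - 1) * b ^ (α - 2)) * (x - b)) x := by
    intro x hx
    have hid : HasDerivAt (fun t : ℝ => t - b) 1 x := (hasDerivAt_id x).sub_const b
    have hsq : HasDerivAt (fun t : ℝ => (t - b) ^ 2) (2 * (x - b)) x := by
      simpa using hid.fun_pow 2
    have hA : HasDerivAt (fun t : ℝ => t ^ α) (α * x ^ (α - 1)) x :=
      Real.hasDerivAt_rpow_const (Or.inl (hpos x hx).ne')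
    have h := ((hA.sub_const (b ^ α)).fun_sub (hid.const_mul (α * b ^ (α - 1)))).fun_sub
      ((hsq.const_mul (α * (α - 1) * b ^ (α - 2))).div_const 2)
    unfold Rfun9
    exact h.congr_deriv (by ring)
  exact lipOn9 d0 bound0

theorem stmt9 (γ vm : ℝ) (hγ : 1 < γ) (hvm : 0 < vm) :
    ∃ C > (0:ℝ), ∃ δ₀ > (0:ℝ), ∀ vp : ℝ, vm < vp →
      ∀ δ : ℝ, δ = vm ^ (-γ) - vp ^ (-γ) → 0 < δ → δ ≤ δ₀ →
        ∀ v : ℝ, vm < v → v < vp →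
          |(v - vm) / (v ^ (-γ) - vm ^ (-γ)) + (v - vp) / (vp ^ (-γ) - v ^ (-γ)) +
              (1 / 2) * (γ * (γ + 1) * vm ^ (-γ - 2)) / (-(γ * vm ^ (-γ - 1))) ^ 2 *
                (vm - vp)| ≤ C * δ ^ 2 := by
  have hγ0 : (0:ℝ) < γ := by linarith
  have hγne : γ ≠ 0 := ne_of_gt hγ0
  set α : ℝ := -(1/γ) with hα
  have hα0 : α < 0 := by
    have : (0:ℝ) < 1/γ := by positivity
    rw [hα]; linarith
  set um : ℝ := vm ^ (-γ) with hum_def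
  have hum : 0 < um := Real.rpow_pos_of_pos hvm _
  set P : ℝ := vm ^ γ with hP_def
  have hP : 0 < P := Real.rpow_pos_of_pos hvm _
  set M : ℝ := |α * (α - 1) * (α - 2)| * (um / 2) ^ (α - 3) with hM_def
  have hM0 : 0 ≤ M := by positivity
  set c : ℝ := (γ + 1) / (2 * γ) * P with hc_def
  have hc : 0 < c := by positivity
  set W : ℝ := α * (α - 1) * (vm * (P * P)) with hW_def
  refine ⟨2 * M + |c * (W / 2)| + c * M * (um / 2) + 1, by positivity, um / 2,
    by positivity, ?_⟩
  intro vp hvp δ hδdef hδpos hδle v hv1 hv2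
  have hv0 : 0 < v := hvm.trans hv1
  have hvp0 : 0 < vp := hv0.trans hv2
  set uv : ℝ := v ^ (-γ) with huv_def
  set up : ℝ := vp ^ (-γ) with hup_def
  have hup0 : 0 < up := Real.rpow_pos_of_pos hvp0 _
  have hnegγ : -γ < 0 := by linarith
  have hord1 : up < uv := Real.rpow_lt_rpow_of_neg hv0 hv2 hnegγ
  have hord2 : uv < um := Real.rpow_lt_rpow_of_neg hvm hv1 hnegγ
  have hordum : up < um := hord1.trans hord2
  -- rpow identities
  have hbase : ∀ x : ℝ, 0 < x → (x ^ (-γ)) ^ α = x := by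
    intro x hx
    rw [← Real.rpow_mul hx.le, show -γ * α = 1 by rw [hα]; field_simp, Real.rpow_one]
  have euma : um ^ α = vm := by rw [hum_def]; exact hbase vm hvm
  have euva : uv ^ α = v := by rw [huv_def]; exact hbase v hv0
  have eupa : up ^ α = vp := by rw [hup_def]; exact hbase vp hvp0
  have e1 : um ^ (α - 1) = vm * P := by
    rw [hum_def, ← Real.rpow_mul hvm.le,
      show -γ * (α - 1) = 1 + γ by rw [hα]; field_simp; ring,
      Real.rpow_add hvm, Real.rpow_one, hP_def]
  have e2 : um ^ (α - 2) = vm * (P * P) := by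
    rw [hum_def, ← Real.rpow_mul hvm.le,
      show -γ * (α - 2) = 1 + (γ + γ) by rw [hα]; field_simp; ring,
      Real.rpow_add hvm, Real.rpow_add hvm, Real.rpow_one, hP_def]
  have e3 : vm ^ (-γ - 2) = (P * (vm * vm))⁻¹ := by
    rw [show -γ - 2 = -(γ + (1 + 1)) by ring, Real.rpow_neg hvm.le,
      Real.rpow_add hvm, Real.rpow_add hvm, Real.rpow_one, hP_def]
  have e4 : vm ^ (-γ - 1) = (P * vm)⁻¹ := by
    rw [show -γ - 1 = -(γ + 1) by ring, Real.rpow_neg hvm.le,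
      Real.rpow_add hvm, Real.rpow_one, hP_def]
  -- interval facts
  have hhalf : um / 2 ≤ up := by
    have : δ = um - up := hδdef
    linarith
  have hmem_um : um ∈ Set.Icc up um := ⟨hordum.le, le_refl um⟩
  have hmem_uv : uv ∈ Set.Icc up um := ⟨hord1.le, hord2.le⟩
  have hmem_up : up ∈ Set.Icc up um := ⟨le_refl up, hordum.le⟩
  -- bound on third derivative
  have hMbd : ∀ x ∈ Set.Icc up um, |α * (α - 1) * (α - 2) * x ^ (α - 3)| ≤ M := by
    intro x hx
    have hx0 : 0 < x := lt_of_lt_of_le (by positivity) (hhalf.trans hx.1)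
    rw [abs_mul, abs_of_pos (Real.rpow_pos_of_pos hx0 _)]
    rw [hM_def]
    exact mul_le_mul_of_nonneg_left
      (Real.rpow_le_rpow_of_nonpos (by positivity) (hhalf.trans hx.1) (by linarith))
      (abs_nonneg _)
  have hK := Rlip9 α up um M hup0 hordum.le hMbd
  have hδum : δ = um - up := hδdef
  -- bounds on remainders
  have h1 : |Rfun9 α um uv| ≤ M * δ * δ * |uv - um| := by
    have := hK um hmem_um uv hmem_uv
    rw [Rfun9_self, sub_zero, ← hδum] at this
    exact this
  have h2 : |Rfun9 α um uv - Rfun9 α um up| ≤ M * δ * δ * |uv - up| := by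
    have := hK up hmem_up uv hmem_uv
    rw [← hδum] at this
    exact this
  have h3 : |Rfun9 α um up| ≤ M * δ * δ * δ := by
    have := hK um hmem_um up hmem_up
    rw [Rfun9_self, sub_zero, ← hδum] at this
    have habs : |up - um| = δ := by rw [abs_of_neg (by linarith), hδum]; ring
    rwa [habs] at this
  have b1 : |Rfun9 α um uv / (uv - um)| ≤ M * δ * δ := by
    rw [abs_div, div_le_iff₀ (abs_pos.2 (sub_ne_zero_of_ne hord2.ne))]
    exact h1
  have b2 : |(Rfun9 α um uv - Rfun9 α um up) / (uv - up)| ≤ M * δ * δ := by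
    rw [abs_div, div_le_iff₀ (abs_pos.2 (sub_ne_zero_of_ne hord1.ne'))]
    exact h2
  have b3 : |c * (W / 2) * δ ^ 2| = |c * (W / 2)| * δ ^ 2 := by
    rw [abs_mul, abs_of_nonneg (sq_nonneg δ)]
  have b4 : |c * Rfun9 α um up| ≤ c * (M * δ * δ * (um / 2)) := by
    rw [abs_mul, abs_of_pos hc]
    refine mul_le_mul_of_nonneg_left (h3.trans ?_) hc.le
    exact mul_le_mul_of_nonneg_left hδle (by positivity)
  -- the key algebraic identity
  have key : (v - vm) / (uv - um) + (v - vp) / (up - uv) +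
      1 / 2 * (γ * (γ + 1) * vm ^ (-γ - 2)) / (-(γ * vm ^ (-γ - 1))) ^ 2 * (vm - vp)
      = Rfun9 α um uv / (uv - um) - (Rfun9 α um uv - Rfun9 α um up) / (uv - up)
        - c * (W / 2) * δ ^ 2 - c * Rfun9 α um up := by
    simp only [Rfun9]
    rw [e1, e2, e3, e4, euma, euva, eupa, hδum, hc_def, hW_def, hα]
    have n1 : uv - um ≠ 0 := sub_ne_zero_of_ne hord2.ne
    have n2 : up - uv ≠ 0 := sub_ne_zero_of_ne hord1.ne
    have n3 : uv - up ≠ 0 := sub_ne_zero_of_ne hord1.ne'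
    have nvm : vm ≠ 0 := hvm.ne'
    have nP : P ≠ 0 := hP.ne'
    field_simp
    ring
  rw [key]
  have hC : (2 * M + |c * (W / 2)| + c * M * (um / 2) + 1) * δ ^ 2
      = M * δ * δ + M * δ * δ + |c * (W / 2)| * δ ^ 2 + c * (M * δ * δ * (um / 2)) + δ ^ 2 := by
    ring
  rw [hC]
  have t1 := abs_le.1 b1
  have t2 := abs_le.1 b2
  have t4 := abs_le.1 b4
  have t3 := abs_le.1 (le_of_eq b3)
  have hsq : (0:ℝ) ≤ δ ^ 2 := sq_nonneg δ
  rw [abs_le]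
  constructor <;> linarith [t1.1, t1.2, t2.1, t2.2, t3.1, t3.2, t4.1, t4.2]
end

section
/- Let γ > 1, let μ > 0 and λ ∈ ℝ satisfy 2μ + 3λ ≥ 0 (so that 2μ + λ > 0), let 0 < v₋ < v₊, let u₁₊ ∈ ℝ, set σ* = √( (p(v₋) − p(v₊)) / (v₊ − v₋) ) > 0 and u₁₋ = u₁₊ + σ*(v₊ − v₋). Then there exist twice continuously differentiable functions v^s, u^s : ℝ → ℝ such that for all ξ ∈ ℝ: (i) −σ* (v^s)'(ξ) = (u^s)'(ξ); (ii) −σ* (u^s)'(ξ) + (p ∘ v^s)'(ξ) = (2μ + λ)(u^s)''(ξ); (iii) v^s(ξ) → v₋ and u^s(ξ) → u₁₋ as ξ → −∞, while v^s(ξ) → v₊ and u^s(ξ) → u₁₊ as ξ → +∞; (iv) (v^s)'(ξ) > 0 and (u^s)'(ξ) = −σ* (v^s)'(ξ) < 0; (v) v₋ < v^s(ξ) < v₊. -/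
open Filter Topology
open Set

lemma rpow_neg_anti' {a b e : ℝ} (ha : 0 < a) (hab : a < b) (he : 0 < e) :
    b ^ (-e) < a ^ (-e) := by
  rw [Real.rpow_neg ha.le, Real.rpow_neg (ha.trans hab).le]
  exact inv_strictAnti₀ (Real.rpow_pos_of_pos ha e) (Real.rpow_lt_rpow ha.le hab he)

lemma hasDerivAt_p' (γ : ℝ) {x : ℝ} (hx : x ≠ 0) :
    HasDerivAt (fun t : ℝ => t ^ (-γ)) (-γ * x ^ (-γ - 1)) x :=
  Real.hasDerivAt_rpow_const (Or.inl hx)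

lemma strictConvex_p' {γ : ℝ} (hγ : 0 < γ) :
    StrictConvexOn ℝ (Ioi (0:ℝ)) (fun t : ℝ => t ^ (-γ)) := by
  have hcont : ContinuousOn (fun t : ℝ => t ^ (-γ)) (Ioi 0) := fun x hx =>
    (Real.continuousAt_rpow_const x (-γ) (Or.inl (ne_of_gt hx))).continuousWithinAt
  apply strictConvexOn_of_deriv2_pos (convex_Ioi 0) hcont
  intro x hx
  rw [interior_Ioi] at hx
  have hd1 : deriv (fun t : ℝ => t ^ (-γ)) =ᶠ[𝓝 x] fun t => -γ * t ^ (-γ - 1) := by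
    filter_upwards [eventually_ne_nhds (ne_of_gt hx)] with y hy
    exact (hasDerivAt_p' γ hy).deriv
  have hd2 : deriv^[2] (fun t : ℝ => t ^ (-γ)) x
      = deriv (fun t : ℝ => -γ * t ^ (-γ - 1)) x := by
    simp only [Function.iterate_succ, Function.iterate_zero, Function.comp_apply, id]
    exact Filter.EventuallyEq.deriv_eq hd1
  rw [hd2]
  have h3 : HasDerivAt (fun t : ℝ => -γ * t ^ (-γ - 1)) (-γ * ((-γ - 1) * x ^ (-γ - 1 - 1))) x := by
    simpa using (Real.hasDerivAt_rpow_const (p := -γ - 1) (Or.inl (ne_of_gt hx))).const_mul (-γ)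
  rw [h3.deriv]
  have h4 : -γ * ((-γ - 1) * x ^ (-γ - 1 - 1)) = γ * (γ + 1) * x ^ (-γ - 1 - 1) := by ring
  rw [h4]
  exact mul_pos (mul_pos hγ (by linarith)) (Real.rpow_pos_of_pos hx _)


lemma ode_profile {F : ℝ → ℝ} {vm vp c1 c2 : ℝ} (hvmvp : vm < vp)
    (hFpos : ∀ t ∈ Ioo vm vp, 0 < F t)
    (hFinvc : ∀ x ∈ Ioo vm vp, ContinuousAt (fun t => (F t)⁻¹) x)
    (hc1 : 0 < c1) (hc2 : 0 < c2)
    (hkey1 : ∀ t ∈ Ioo vm vp, c1 * (t - vm)⁻¹ ≤ (F t)⁻¹)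
    (hkey2 : ∀ t ∈ Ioo vm vp, c2 * (vp - t)⁻¹ ≤ (F t)⁻¹) :
    ∃ vs : ℝ → ℝ, (∀ ξ, HasDerivAt vs (F (vs ξ)) ξ) ∧ (∀ ξ, vs ξ ∈ Ioo vm vp) ∧
      Continuous vs ∧ Tendsto vs atBot (𝓝 vm) ∧ Tendsto vs atTop (𝓝 vp) := by
  set v0 : ℝ := (vm + vp) / 2 with hv0def
  have hv0 : v0 ∈ Ioo vm vp := ⟨by rw [hv0def]; linarith, by rw [hv0def]; linarith⟩
  set G : ℝ → ℝ := fun v => ∫ t in v0..v, (F t)⁻¹ with hGdef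
  have hFinvcOn : ContinuousOn (fun t => (F t)⁻¹) (Ioo vm vp) :=
    fun x hx => (hFinvc x hx).continuousWithinAt
  have hGderiv : ∀ v ∈ Ioo vm vp, HasDerivAt G (F v)⁻¹ v := by
    intro v hv
    apply intervalIntegral.integral_hasDerivAt_right
    · apply ContinuousOn.intervalIntegrable
      exact hFinvcOn.mono (Set.ordConnected_Ioo.uIcc_subset hv0 hv)
    · exact ContinuousOn.stronglyMeasurableAtFilter isOpen_Ioo hFinvcOn v hv
    · exact hFinvc v hv
  have hGcont : ContinuousOn G (Ioo vm vp) :=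
    fun x hx => ((hGderiv x hx).differentiableAt.continuousAt).continuousWithinAt
  have hGmono : StrictMonoOn G (Ioo vm vp) := by
    apply strictMonoOn_of_deriv_pos (convex_Ioo vm vp) hGcont
    intro x hx
    rw [interior_Ioo] at hx
    rw [(hGderiv x hx).deriv]
    exact inv_pos.2 (hFpos x hx)
  -- G tends to -infinity at vm+
  have hGbot : Tendsto G (𝓝[>] vm) atBot := by
    have hmono : MonotoneOn (fun v => G v - c1 * Real.log (v - vm)) (Ioo vm vp) := by
      apply monotoneOn_of_deriv_nonneg (convex_Ioo vm vp)
      · intro x hx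
        exact ((hGcont x hx)).sub
          ((continuousAt_const.mul ((continuousAt_id.sub continuousAt_const).log
            (by simp only [Pi.sub_apply, id]; intro h; rw [sub_eq_zero] at h; exact absurd h (ne_of_gt hx.1)))).continuousWithinAt)
      · rw [interior_Ioo]
        intro x hx
        exact ((hGderiv x hx).differentiableAt.sub
          (((differentiableAt_id.sub (differentiableAt_const _)).log
            (by simp only [Pi.sub_apply, id]; intro h; rw [sub_eq_zero] at h; exact absurd h (ne_of_gt hx.1))).const_mul
            c1)).differentiableWithinAt
      · rw [interior_Ioo]
        intro x hx
        have hne : x - vm ≠ 0 := by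
          have := hx.1; intro h; rw [sub_eq_zero] at h; exact absurd h (ne_of_gt this)
        have hlogd : HasDerivAt (fun v : ℝ => G v - c1 * Real.log (v - vm))
            ((F x)⁻¹ - c1 * (1 / (x - vm))) x := by
          apply (hGderiv x hx).sub
          apply HasDerivAt.const_mul
          exact ((hasDerivAt_id x).sub_const vm).log hne
        rw [hlogd.deriv, one_div]
        linarith [hkey1 x hx]
    have hub : G ≤ᶠ[𝓝[>] vm]
        (fun v => (G v0 - c1 * Real.log (v0 - vm)) + c1 * Real.log (v - vm)) := by
      filter_upwards [Ioo_mem_nhdsGT_of_mem (⟨le_refl vm, hv0.1⟩ : vm ∈ Ico vm v0)]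
        with v hv
      have hvI : v ∈ Ioo vm vp := ⟨hv.1, lt_trans hv.2 hv0.2⟩
      have := hmono hvI hv0 (le_of_lt hv.2)
      simp only [hGdef] at this ⊢
      linarith
    apply tendsto_atBot_mono' _ hub
    apply tendsto_atBot_add_const_left
    apply Tendsto.const_mul_atBot hc1
    have hsub : Tendsto (fun v : ℝ => v - vm) (𝓝[>] vm) (𝓝[>] 0) := by
      apply tendsto_nhdsWithin_of_tendsto_nhds_of_eventually_within
      · have h1 : Tendsto (fun v : ℝ => v - vm) (𝓝 vm) (𝓝 (vm - vm)) :=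
          (continuous_id.sub continuous_const).tendsto vm
        rw [sub_self] at h1
        exact h1.mono_left nhdsWithin_le_nhds
      · filter_upwards [self_mem_nhdsWithin] with v hv
        exact sub_pos.2 (mem_Ioi.1 hv)
    exact Real.tendsto_log_nhdsGT_zero.comp hsub
  -- G tends to +infinity at vp-
  have hGtop : Tendsto G (𝓝[<] vp) atTop := by
    have hmono : MonotoneOn (fun v => G v + c2 * Real.log (vp - v)) (Ioo vm vp) := by
      apply monotoneOn_of_deriv_nonneg (convex_Ioo vm vp)
      · intro x hx
        exact ((hGcont x hx)).add
          ((continuousAt_const.mul ((continuousAt_const.sub continuousAt_id).log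
            (by simp only [Pi.sub_apply, id]; intro h; rw [sub_eq_zero] at h; exact absurd h.symm (ne_of_lt hx.2)))).continuousWithinAt)
      · rw [interior_Ioo]
        intro x hx
        exact ((hGderiv x hx).differentiableAt.add
          ((((differentiableAt_const _).sub differentiableAt_id).log
            (by simp only [Pi.sub_apply, id]; intro h; rw [sub_eq_zero] at h; exact absurd h.symm (ne_of_lt hx.2))).const_mul
            c2)).differentiableWithinAt
      · rw [interior_Ioo]
        intro x hx
        have hne : vp - x ≠ 0 := by
          have := hx.2; intro h; rw [sub_eq_zero] at h; exact absurd h.symm (ne_of_lt this)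
        have hlogd : HasDerivAt (fun v : ℝ => G v + c2 * Real.log (vp - v))
            ((F x)⁻¹ + c2 * ((-1) / (vp - x))) x := by
          apply (hGderiv x hx).add
          apply HasDerivAt.const_mul
          exact ((hasDerivAt_id x).const_sub vp).log hne
        rw [hlogd.deriv]
        have h2 := hkey2 x hx
        have h3 : c2 * (-1 / (vp - x)) = -(c2 * (vp - x)⁻¹) := by
          field_simp
        rw [h3]
        linarith
    have hub : (fun v => (G v0 + c2 * Real.log (vp - v0)) + c2 * -Real.log (vp - v))
        ≤ᶠ[𝓝[<] vp] G := by
      filter_upwards [Ioo_mem_nhdsLT_of_mem (⟨hv0.2, le_refl vp⟩ : vp ∈ Ioc v0 vp)]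
        with v hv
      have hvI : v ∈ Ioo vm vp := ⟨lt_trans hv0.1 hv.1, hv.2⟩
      have := hmono hv0 hvI (le_of_lt hv.1)
      simp only [hGdef] at this ⊢
      linarith
    apply tendsto_atTop_mono' _ hub
    apply tendsto_atTop_add_const_left
    apply Tendsto.const_mul_atTop hc2
    have hsub : Tendsto (fun v : ℝ => vp - v) (𝓝[<] vp) (𝓝[>] 0) := by
      apply tendsto_nhdsWithin_of_tendsto_nhds_of_eventually_within
      · have h1 : Tendsto (fun v : ℝ => vp - v) (𝓝 vp) (𝓝 (vp - vp)) :=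
          (continuous_const.sub continuous_id).tendsto vp
        rw [sub_self] at h1
        exact h1.mono_left nhdsWithin_le_nhds
      · filter_upwards [self_mem_nhdsWithin] with v hv
        exact sub_pos.2 (mem_Iio.1 hv)
    exact tendsto_neg_atBot_atTop.comp
      (Real.tendsto_log_nhdsGT_zero.comp hsub)
  -- surjectivity of G onto ℝ
  have hGsurj : ∀ ξ : ℝ, ∃ v ∈ Ioo vm vp, G v = ξ := by
    intro ξ
    have hmemA : ∀ᶠ v in 𝓝[>] vm, v ∈ Ioo vm vp :=
      eventually_of_mem (Ioo_mem_nhdsGT_of_mem ⟨le_refl vm, hvmvp⟩) (fun v hv => hv)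
    obtain ⟨a, haG, haI⟩ :=
      ((hGbot.eventually (eventually_lt_atBot ξ)).and hmemA).exists
    have hmemB : ∀ᶠ v in 𝓝[<] vp, v ∈ Ioo vm vp :=
      eventually_of_mem (Ioo_mem_nhdsLT_of_mem ⟨hvmvp, le_refl vp⟩) (fun v hv => hv)
    obtain ⟨b, hbG, hbI⟩ :=
      ((hGtop.eventually (eventually_gt_atTop ξ)).and hmemB).exists
    have hab : a < b := by
      by_contra h
      push_neg at h
      have := hGmono.monotoneOn hbI haI h
      linarith
    have hsub : Icc a b ⊆ Ioo vm vp := fun x hx =>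
      ⟨lt_of_lt_of_le haI.1 hx.1, lt_of_le_of_lt hx.2 hbI.2⟩
    have hIVT := intermediate_value_Ioo (le_of_lt hab) (hGcont.mono hsub)
    obtain ⟨v, hvab, hGv⟩ := hIVT (⟨haG, hbG⟩ : ξ ∈ Ioo (G a) (G b))
    exact ⟨v, hsub ⟨le_of_lt hvab.1, le_of_lt hvab.2⟩, hGv⟩
  -- build the inverse via an order isomorphism
  have hsurj : Function.Surjective (fun x : Ioo vm vp => G x.1) := by
    intro ξ
    obtain ⟨v, hv, hGv⟩ := hGsurj ξ
    exact ⟨⟨v, hv⟩, hGv⟩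
  have hsm : StrictMono (fun x : Ioo vm vp => G x.1) := fun x y h => hGmono x.2 y.2 h
  set e := StrictMono.orderIsoOfSurjective _ hsm hsurj with hedef
  set vs : ℝ → ℝ := fun ξ => ((e.symm ξ : Ioo vm vp) : ℝ) with hvsdef
  have hmem : ∀ ξ, vs ξ ∈ Ioo vm vp := fun ξ => (e.symm ξ).2
  have hGvs : ∀ ξ, G (vs ξ) = ξ := by
    intro ξ
    have h1 : e (e.symm ξ) = ξ := e.apply_symm_apply ξ
    have h2 : e (e.symm ξ) = G (vs ξ) := by
      rw [hedef]
      exact congrFun (StrictMono.coe_orderIsoOfSurjective _ hsm hsurj) (e.symm ξ)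
    rw [← h2, h1]
  have hcont : Continuous vs := continuous_subtype_val.comp e.symm.continuous
  have hds : ∀ ξ : ℝ, HasDerivAt vs (F (vs ξ)) ξ := by
    intro ξ
    have h := HasDerivAt.of_local_left_inverse (hcont.continuousAt)
      (hGderiv (vs ξ) (hmem ξ)) (ne_of_gt (inv_pos.2 (hFpos _ (hmem ξ))))
      (Eventually.of_forall hGvs)
    simpa [inv_inv] using h
  have hmono : Monotone vs := fun a b h => Subtype.coe_le_coe.2 (e.symm.monotone h)
  have hrange : Set.range vs = Ioo vm vp := by
    ext x
    constructor
    · rintro ⟨ξ, rfl⟩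
      exact hmem ξ
    · intro hx
      exact ⟨e ⟨x, hx⟩, by simp [hvsdef]⟩
  refine ⟨vs, hds, hmem, hcont, ?_, ?_⟩
  · have hbb : BddBelow (Set.range vs) := by rw [hrange]; exact bddBelow_Ioo
    have h1 := tendsto_atBot_ciInf hmono hbb
    have h2 : ⨅ ξ, vs ξ = vm := by
      rw [← sInf_range, hrange]
      exact csInf_Ioo hvmvp
    rwa [h2] at h1
  · have hba : BddAbove (Set.range vs) := by rw [hrange]; exact bddAbove_Ioo
    have h1 := tendsto_atTop_ciSup hmono hba
    have h2 : ⨆ ξ, vs ξ = vp := by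
      rw [← sSup_range, hrange]
      exact csSup_Ioo hvmvp
    rwa [h2] at h1

/- STATEMENT 13: Let γ > 1, μ > 0, λ ∈ ℝ (denoted lam) with 2μ + 3λ ≥ 0, let
0 < v₋ < v₊ (denoted vm, vp), u₁₊ ∈ ℝ (denoted up), set
σ* = √((p(v₋) − p(v₊))/(v₊ − v₋)) (denoted σs) and u₁₋ = u₁₊ + σ*(v₊ − v₋)
(denoted um), with p(v) = v^(−γ). Then there exist C² functions v^s, u^s : ℝ → ℝ
such that for all ξ:
(i) −σ*(v^s)' = (u^s)';
(ii) −σ*(u^s)' + (p ∘ v^s)' = (2μ + λ)(u^s)'';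
(iii) v^s → v₋, u^s → u₁₋ at −∞ and v^s → v₊, u^s → u₁₊ at +∞;
(iv) (v^s)'(ξ) > 0 and (u^s)'(ξ) = −σ*(v^s)'(ξ) < 0;
(v) v₋ < v^s(ξ) < v₊. -/
set_option maxHeartbeats 1000000 in
theorem stmt13 (γ μ lam vm vp up σs um : ℝ) (hγ : 1 < γ) (hμ : 0 < μ)
    (hlam : 0 ≤ 2 * μ + 3 * lam) (hvm : 0 < vm) (hvmvp : vm < vp)
    (hσs : σs = Real.sqrt ((vm ^ (-γ) - vp ^ (-γ)) / (vp - vm)))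
    (hum : um = up + σs * (vp - vm)) :
    ∃ vs us : ℝ → ℝ, ContDiff ℝ 2 vs ∧ ContDiff ℝ 2 us ∧
      (∀ ξ : ℝ, -σs * deriv vs ξ = deriv us ξ) ∧
      (∀ ξ : ℝ, -σs * deriv us ξ + deriv (fun x => (vs x) ^ (-γ)) ξ =
        (2 * μ + lam) * deriv (deriv us) ξ) ∧
      Tendsto vs atBot (𝓝 vm) ∧ Tendsto us atBot (𝓝 um) ∧
      Tendsto vs atTop (𝓝 vp) ∧ Tendsto us atTop (𝓝 up) ∧
      (∀ ξ : ℝ, 0 < deriv vs ξ) ∧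
      (∀ ξ : ℝ, deriv us ξ = -σs * deriv vs ξ ∧ deriv us ξ < 0) ∧
      (∀ ξ : ℝ, vm < vs ξ ∧ vs ξ < vp) := by
  have hγ0 : (0:ℝ) < γ := by linarith
  have hν : (0:ℝ) < 2 * μ + lam := by linarith
  set ν : ℝ := 2 * μ + lam with hνdef
  have hvp : 0 < vp := hvm.trans hvmvp
  have hvv : 0 < vp - vm := by linarith
  have hpdec : vp ^ (-γ) < vm ^ (-γ) := rpow_neg_anti' hvm hvmvp hγ0
  have hApos : 0 < (vm ^ (-γ) - vp ^ (-γ)) / (vp - vm) := div_pos (by linarith) hvv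
  have hσpos : 0 < σs := by rw [hσs]; exact Real.sqrt_pos.2 hApos
  have hνσ : 0 < ν * σs := mul_pos hν hσpos
  have hσ2 : σs ^ 2 * (vp - vm) = vm ^ (-γ) - vp ^ (-γ) := by
    rw [hσs, Real.sq_sqrt hApos.le]
    field_simp
  -- the profile vector field
  set F : ℝ → ℝ := fun t => (vm ^ (-γ) - t ^ (-γ) - σs ^ 2 * (t - vm)) / (ν * σs) with hFdef
  have hFpos : ∀ t ∈ Ioo vm vp, 0 < F t := by
    intro t ht
    apply div_pos _ hνσ
    set a : ℝ := (vp - t) / (vp - vm) with hadef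
    set b : ℝ := (t - vm) / (vp - vm) with hbdef
    have ha : 0 < a := div_pos (by linarith [ht.2]) hvv
    have hb : 0 < b := div_pos (by linarith [ht.1]) hvv
    have hne : vp - vm ≠ 0 := ne_of_gt hvv
    have hab : a + b = 1 := by
      rw [hadef, hbdef, ← add_div, div_eq_one_iff_eq hne]; ring
    have hts : a * vm + b * vp = t := by
      rw [hadef, hbdef]; field_simp; ring
    have hconv := (strictConvex_p' hγ0).2 (mem_Ioi.2 hvm) (mem_Ioi.2 hvp)
      (ne_of_lt hvmvp) ha hb hab
    simp only [smul_eq_mul] at hconv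
    rw [hts] at hconv
    have htb : t - vm = b * (vp - vm) := by
      rw [hbdef, div_mul_cancel₀ _ hne]
    have h2 : σs ^ 2 * (t - vm) = b * (vm ^ (-γ) - vp ^ (-γ)) := by
      rw [htb, ← hσ2]; ring
    have hab2 : a * vm ^ (-γ) + b * vm ^ (-γ) = vm ^ (-γ) := by
      rw [← add_mul, hab, one_mul]
    linarith [hconv, h2, hab2]
  have hFcont : ContinuousOn F (Ioi 0) := by
    intro x hx
    have : ContinuousAt F x := by
      have h1 : ContinuousAt (fun t : ℝ => t ^ (-γ)) x :=
        Real.continuousAt_rpow_const x (-γ) (Or.inl (ne_of_gt hx))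
      exact (((continuousAt_const.sub h1).sub (continuousAt_const.mul
        (continuousAt_id.sub continuousAt_const))).div_const _)
    exact this.continuousWithinAt
  have hIsub : Ioo vm vp ⊆ Ioi 0 := fun x hx => lt_trans hvm hx.1
  have hFc : ∀ x ∈ Ioo vm vp, ContinuousAt F x :=
    fun x hx => (hFcont.continuousAt (Ioi_mem_nhds (hIsub hx)))
  have hFinvc : ∀ x ∈ Ioo vm vp, ContinuousAt (fun t => (F t)⁻¹) x :=
    fun x hx => (hFc x hx).inv₀ (ne_of_gt (hFpos x hx))
  -- derivative of F
  have hFderiv : ∀ x : ℝ, 0 < x →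
      HasDerivAt F ((γ * x ^ (-γ - 1) - σs ^ 2) / (ν * σs)) x := by
    intro x hx
    have h1 : HasDerivAt (fun t : ℝ => vm ^ (-γ) - t ^ (-γ) - σs ^ 2 * (t - vm))
        (-(-γ * x ^ (-γ - 1)) - σs ^ 2 * 1) x := by
      exact ((hasDerivAt_p' γ (ne_of_gt hx)).const_sub _).sub
        (((hasDerivAt_id x).sub_const vm).const_mul (σs ^ 2))
    have := h1.div_const (ν * σs)
    exact this.congr_deriv (by ring)
  -- key inverse bounds
  set c1 : ℝ := (ν * σs) / (γ * vm ^ (-γ - 1)) with hc1def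
  set c2 : ℝ := ν / σs with hc2def
  have hK1 : 0 < γ * vm ^ (-γ - 1) := mul_pos hγ0 (Real.rpow_pos_of_pos hvm _)
  have hc1 : 0 < c1 := div_pos hνσ hK1
  have hc2 : 0 < c2 := div_pos hν hσpos
  have hbound1 : ∀ t ∈ Ioo vm vp, F t ≤ (γ * vm ^ (-γ - 1) / (ν * σs)) * (t - vm) := by
    intro t ht
    obtain ⟨c, hc, hslope⟩ := exists_hasDerivAt_eq_slope (fun t : ℝ => t ^ (-γ))
      (fun x => -γ * x ^ (-γ - 1)) ht.1
      (fun x hx => ((Real.continuousAt_rpow_const x (-γ)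
        (Or.inl (ne_of_gt (lt_of_lt_of_le hvm hx.1)))).continuousWithinAt))
      (fun x hx => hasDerivAt_p' γ (ne_of_gt (lt_trans hvm hx.1)))
    have hcpos : 0 < c := lt_trans hvm hc.1
    have hcc : c ^ (-(γ + 1)) < vm ^ (-(γ + 1)) := rpow_neg_anti' hvm hc.1 (by linarith)
    have hexp : -(γ + 1) = -γ - 1 := by ring
    rw [hexp] at hcc
    have htm : 0 < t - vm := by linarith [ht.1]
    -- vm^(-γ) - t^(-γ) = γ c^(-γ-1) (t - vm) ≤ γ vm^(-γ-1)(t-vm)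
    have h5 : vm ^ (-γ) - t ^ (-γ) = γ * c ^ (-γ - 1) * (t - vm) := by
      have := hslope
      field_simp at this
      nlinarith [this]
    have h6 : vm ^ (-γ) - t ^ (-γ) ≤ γ * vm ^ (-γ - 1) * (t - vm) := by
      rw [h5]
      have := mul_lt_mul_of_pos_left hcc hγ0
      nlinarith [htm, this]
    rw [hFdef]
    rw [div_le_iff₀ hνσ]
    have hσt : 0 ≤ σs ^ 2 * (t - vm) := by positivity
    have : γ * vm ^ (-γ - 1) / (ν * σs) * (t - vm) * (ν * σs)
        = γ * vm ^ (-γ - 1) * (t - vm) := by field_simp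
    rw [this]
    linarith
  have hbound2 : ∀ t ∈ Ioo vm vp, F t ≤ (σs / ν) * (vp - t) := by
    intro t ht
    have htpos : 0 < t := lt_trans hvm ht.1
    have hp2 : vp ^ (-γ) < t ^ (-γ) := rpow_neg_anti' htpos ht.2 hγ0
    rw [hFdef, div_le_iff₀ hνσ]
    have hkey : vm ^ (-γ) - t ^ (-γ) - σs ^ 2 * (t - vm)
        = σs ^ 2 * (vp - t) + (vp ^ (-γ) - t ^ (-γ)) := by
      linear_combination -hσ2
    rw [hkey]
    have : σs / ν * (vp - t) * (ν * σs) = σs ^ 2 * (vp - t) := by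
      field_simp
    rw [this]
    linarith
  have hkey1 : ∀ t ∈ Ioo vm vp, c1 * (t - vm)⁻¹ ≤ (F t)⁻¹ := by
    intro t ht
    have htm : 0 < t - vm := by linarith [ht.1]
    have h := inv_anti₀ (hFpos t ht) (hbound1 t ht)
    calc c1 * (t - vm)⁻¹ = (γ * vm ^ (-γ - 1) / (ν * σs) * (t - vm))⁻¹ := by
          rw [mul_inv, inv_div]
      _ ≤ (F t)⁻¹ := h
  have hkey2 : ∀ t ∈ Ioo vm vp, c2 * (vp - t)⁻¹ ≤ (F t)⁻¹ := by
    intro t ht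
    have htm : 0 < vp - t := by linarith [ht.2]
    have h := inv_anti₀ (hFpos t ht) (hbound2 t ht)
    calc c2 * (vp - t)⁻¹ = (σs / ν * (vp - t))⁻¹ := by
          rw [mul_inv, inv_div]
      _ ≤ (F t)⁻¹ := h
  -- obtain the profile
  obtain ⟨vs, hds, hmem, hcontvs, hbotvs, htopvs⟩ :=
    ode_profile hvmvp hFpos hFinvc hc1 hc2 hkey1 hkey2
  have hvspos : ∀ ξ, 0 < vs ξ := fun ξ => lt_trans hvm (hmem ξ).1
  have hdvs : deriv vs = fun ξ => F (vs ξ) := funext fun ξ => (hds ξ).deriv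
  have hdvspos : ∀ ξ, 0 < deriv vs ξ := by
    intro ξ; rw [hdvs]; exact hFpos _ (hmem ξ)
  set F' : ℝ → ℝ := fun x => (γ * x ^ (-γ - 1) - σs ^ 2) / (ν * σs) with hF'def
  have hFcomp : ∀ ξ, HasDerivAt (fun ξ => F (vs ξ)) (F' (vs ξ) * F (vs ξ)) ξ :=
    fun ξ => (hFderiv _ (hvspos ξ)).comp ξ (hds ξ)
  have hd2 : ∀ ξ, HasDerivAt (deriv vs) (F' (vs ξ) * F (vs ξ)) ξ := by
    intro ξ; rw [hdvs]; exact hFcomp ξ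
  have hF'c : ∀ x : ℝ, 0 < x → ContinuousAt F' x := by
    intro x hx
    exact ((continuousAt_const.mul (Real.continuousAt_rpow_const x (-γ - 1)
      (Or.inl (ne_of_gt hx)))).sub continuousAt_const).div_const _
  have hcF : Continuous (fun ξ => F (vs ξ)) :=
    continuous_iff_continuousAt.2 fun ξ => (hFc _ (hmem ξ)).comp hcontvs.continuousAt
  have hcF' : Continuous (fun ξ => F' (vs ξ)) :=
    continuous_iff_continuousAt.2 fun ξ => (hF'c _ (hvspos ξ)).comp hcontvs.continuousAt
  have hdiff : Differentiable ℝ vs := fun ξ => (hds ξ).differentiableAt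
  have hdiff2 : Differentiable ℝ (deriv vs) := fun ξ => (hd2 ξ).differentiableAt
  have hcont2 : Continuous (deriv (deriv vs)) := by
    have hdd : deriv (deriv vs) = fun ξ => F' (vs ξ) * F (vs ξ) :=
      funext fun ξ => (hd2 ξ).deriv
    rw [hdd]
    exact hcF'.mul hcF
  have hvs2 : ContDiff ℝ 2 vs := by
    have h2 : (2 : WithTop ℕ∞) = 1 + 1 := by norm_num
    rw [h2, contDiff_succ_iff_deriv]
    refine ⟨hdiff, by simp, ?_⟩
    have h1 : (1 : WithTop ℕ∞) = 0 + 1 := by norm_num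
    rw [h1, contDiff_succ_iff_deriv]
    exact ⟨hdiff2, by simp, contDiff_zero.2 hcont2⟩
  set us : ℝ → ℝ := fun ξ => up + σs * (vp - vs ξ) with husdef
  have hus2 : ContDiff ℝ 2 us :=
    contDiff_const.add (contDiff_const.mul (contDiff_const.sub hvs2))
  have hdus : ∀ ξ, HasDerivAt us (-σs * F (vs ξ)) ξ := by
    intro ξ
    have h := (((hds ξ).const_sub vp).const_mul σs).const_add up
    exact h.congr_deriv (by ring)
  have hdusf : deriv us = fun ξ => -σs * F (vs ξ) := funext fun ξ => (hdus ξ).deriv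
  have hd2us : ∀ ξ, HasDerivAt (deriv us) (-σs * (F' (vs ξ) * F (vs ξ))) ξ := by
    intro ξ
    rw [hdusf]
    exact (hFcomp ξ).const_mul (-σs)
  have hi : ∀ ξ : ℝ, -σs * deriv vs ξ = deriv us ξ := by
    intro ξ
    rw [hdvs, hdusf]
  have hii : ∀ ξ : ℝ, -σs * deriv us ξ + deriv (fun x => (vs x) ^ (-γ)) ξ =
      ν * deriv (deriv us) ξ := by
    intro ξ
    have hpc : HasDerivAt (fun x => (vs x) ^ (-γ))
        (-γ * (vs ξ) ^ (-γ - 1) * F (vs ξ)) ξ :=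
      (hasDerivAt_p' γ (ne_of_gt (hvspos ξ))).comp ξ (hds ξ)
    rw [hpc.deriv, (hd2us ξ).deriv, hdusf]
    simp only [hF'def]
    generalize F (vs ξ) = B
    generalize (vs ξ) ^ (-γ - 1) = A
    have hνσne : ν * σs ≠ 0 := ne_of_gt hνσ
    field_simp
    ring
  have husbot : Tendsto us atBot (𝓝 um) := by
    have h1 : Tendsto us atBot (𝓝 (up + σs * (vp - vm))) :=
      ((tendsto_const_nhds.sub hbotvs).const_mul σs).const_add up
    rwa [hum]
  have hustop : Tendsto us atTop (𝓝 up) := by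
    have h1 : Tendsto us atTop (𝓝 (up + σs * (vp - vp))) :=
      ((tendsto_const_nhds.sub htopvs).const_mul σs).const_add up
    simpa using h1
  refine ⟨vs, us, hvs2, hus2, hi, hii, hbotvs, husbot, htopvs, hustop, hdvspos,
    fun ξ => ⟨(hi ξ).symm, ?_⟩, fun ξ => ⟨(hmem ξ).1, (hmem ξ).2⟩⟩
  rw [← hi ξ]
  have := hdvspos ξ
  nlinarith [hσpos]
end

section
/- Fix γ > 1 and v₋ > 0, and set σ₋ = √(γ v₋^{−γ−1}). There exist constants C > 0 and δ₀ > 0 such that for every v₊ > v₋ with 0 < δ := p(v₋) − p(v₊) ≤ δ₀, setting σ* = √( (p(v₋) − p(v₊)) / (v₊ − v₋) ), for every v with v₋ < v < v₊ one has | (δ / (σ* (v₊ − v₋))) · ( (v − v₋)/(p(v) − p(v₋)) + (v − v₊)/(p(v₊) − p(v)) ) − δ · p''(v₋) / (2 σ₋ (p'(v₋))²) | ≤ C δ². -/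
set_option maxHeartbeats 1000000

open Real Set in
lemma stmt16_KL (γ vm : ℝ) (hγ : 1 < γ) (hvm : 0 < vm) (a b : ℝ) (ha : vm ≤ a) (hab : a ≤ b) :
    |(a ^ (-γ) - b ^ (-γ)) - (b - a) * (γ * vm ^ (-γ - 1)
        - γ * (γ + 1) * vm ^ (-γ - 2) * ((a + b - 2 * vm) / 2))|
      ≤ (γ * (γ + 1) * (γ + 2) * vm ^ (-γ - 3)) * (b - vm) ^ 2 * (b - a) := by
  set A := γ * vm ^ (-γ - 1) with hA
  set B := γ * (γ + 1) * vm ^ (-γ - 2) with hB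
  set K := γ * (γ + 1) * (γ + 2) * vm ^ (-γ - 3) with hK
  have hγ0 : (0:ℝ) < γ := by linarith
  have hpos : ∀ x : ℝ, x ∈ Icc vm b → 0 < x := fun x hx => lt_of_lt_of_le hvm hx.1
  -- Step 1: |φ''(x) - B| ≤ K (x - vm) on [vm, b]
  have step1 : ∀ x ∈ Icc vm b, |γ * (γ + 1) * x ^ (-γ - 2) - B| ≤ K * (x - vm) := by
    intro x hx
    have key : ‖(fun y : ℝ => γ * (γ + 1) * y ^ (-γ - 2)) x
        - (fun y : ℝ => γ * (γ + 1) * y ^ (-γ - 2)) vm‖ ≤ K * ‖x - vm‖ := by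
      apply Convex.norm_image_sub_le_of_norm_hasDerivWithin_le
        (f' := fun y : ℝ => γ * (γ + 1) * ((-γ - 2) * y ^ (-γ - 3)))
        (s := Icc vm b) ?_ ?_ (convex_Icc vm b) (left_mem_Icc.mpr (ha.trans hab)) hx
      · intro y hy
        have hy0 : 0 < y := hpos y hy
        have := (Real.hasDerivAt_rpow_const (p := -γ - 2) (Or.inl hy0.ne')).const_mul (γ * (γ + 1))
        have hexp : -γ - 2 - 1 = -γ - 3 := by ring
        rw [hexp] at this
        exact this.hasDerivWithinAt
      · intro y hy
        have hy0 : 0 < y := hpos y hy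
        have h1 : y ^ (-γ - 3) ≤ vm ^ (-γ - 3) :=
          Real.rpow_le_rpow_of_nonpos hvm hy.1 (by linarith)
        have h2 : 0 < y ^ (-γ - 3) := Real.rpow_pos_of_pos hy0 _
        have habs : ‖γ * (γ + 1) * ((-γ - 2) * y ^ (-γ - 3))‖
            = γ * (γ + 1) * (γ + 2) * y ^ (-γ - 3) := by
          rw [Real.norm_eq_abs, abs_mul, abs_mul, abs_mul, abs_of_pos hγ0,
            abs_of_pos (by linarith : (0:ℝ) < γ + 1), abs_of_neg (by linarith : -γ - 2 < 0),
            abs_of_pos h2]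
          ring
        rw [habs, hK]
        have : (0:ℝ) ≤ γ * (γ + 1) * (γ + 2) := by positivity
        nlinarith
    simpa [Real.norm_eq_abs, abs_of_nonneg (by linarith [hx.1] : (0:ℝ) ≤ x - vm), hB] using key
  -- Step 2: |s(x)| ≤ K (b-vm)^2 on [vm,b], s(x) = -γ x^(-γ-1) + A - B (x - vm)
  have step2 : ∀ x ∈ Icc vm b, |(-γ) * x ^ (-γ - 1) + A - B * (x - vm)| ≤ K * (b - vm) ^ 2 := by
    intro x hx
    have key : ‖(fun y : ℝ => (-γ) * y ^ (-γ - 1) + A - B * (y - vm)) x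
        - (fun y : ℝ => (-γ) * y ^ (-γ - 1) + A - B * (y - vm)) vm‖
        ≤ (K * (b - vm)) * ‖x - vm‖ := by
      apply Convex.norm_image_sub_le_of_norm_hasDerivWithin_le
        (f' := fun y : ℝ => γ * (γ + 1) * y ^ (-γ - 2) - B)
        (s := Icc vm b) ?_ ?_ (convex_Icc vm b) (left_mem_Icc.mpr (ha.trans hab)) hx
      · intro y hy
        have hy0 : 0 < y := hpos y hy
        have h1 := (Real.hasDerivAt_rpow_const (p := -γ - 1) (Or.inl hy0.ne')).const_mul (-γ)
        have hexp : -γ - 1 - 1 = -γ - 2 := by ring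
        rw [hexp] at h1
        have h2 : HasDerivAt (fun y : ℝ => (-γ) * y ^ (-γ - 1) + A - B * (y - vm))
            ((-γ) * ((-γ - 1) * y ^ (-γ - 2)) + 0 - B * 1) y := by
          exact ((h1.add (hasDerivAt_const y A)).sub (((hasDerivAt_id y).sub_const vm).const_mul B))
        have heq : (-γ) * ((-γ - 1) * y ^ (-γ - 2)) + 0 - B * 1
            = γ * (γ + 1) * y ^ (-γ - 2) - B := by ring
        rw [heq] at h2
        exact h2.hasDerivWithinAt
      · intro y hy
        have h1 := step1 y hy
        rw [Real.norm_eq_abs]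
        have hKpos : 0 < K := by rw [hK]; positivity
        calc |γ * (γ + 1) * y ^ (-γ - 2) - B| ≤ K * (y - vm) := h1
          _ ≤ K * (b - vm) := by nlinarith [hy.2, hKpos]
    have hxvm : (0:ℝ) ≤ x - vm := by linarith [hx.1]
    have h2 : (fun y : ℝ => (-γ) * y ^ (-γ - 1) + A - B * (y - vm)) vm = 0 := by
      simp only [hA]
      ring
    rw [h2, sub_zero, Real.norm_eq_abs, Real.norm_eq_abs, abs_of_nonneg hxvm] at key
    have hKpos : 0 < K := by rw [hK]; positivity
    calc |(-γ) * x ^ (-γ - 1) + A - B * (x - vm)| ≤ K * (b - vm) * (x - vm) := key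
      _ ≤ K * (b - vm) ^ 2 := by
        nlinarith [mul_nonneg (mul_nonneg hKpos.le
          (by linarith [hx.1, hx.2] : (0:ℝ) ≤ b - vm)) (by linarith [hx.2] : (0:ℝ) ≤ b - x)]
  -- Step 3: MVT for r on [a,b]
  have key : ‖(fun y : ℝ => y ^ (-γ) + A * y - B / 2 * (y - vm) ^ 2) b
      - (fun y : ℝ => y ^ (-γ) + A * y - B / 2 * (y - vm) ^ 2) a‖
      ≤ (K * (b - vm) ^ 2) * ‖b - a‖ := by
    apply Convex.norm_image_sub_le_of_norm_hasDerivWithin_le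
      (f' := fun y : ℝ => (-γ) * y ^ (-γ - 1) + A - B * (y - vm))
      (s := Icc a b) ?_ ?_ (convex_Icc a b) (left_mem_Icc.mpr hab) (right_mem_Icc.mpr hab)
    · intro y hy
      have hy0 : 0 < y := lt_of_lt_of_le hvm (ha.trans hy.1)
      have h1 := Real.hasDerivAt_rpow_const (p := -γ) (x := y) (Or.inl hy0.ne')
      have h2 : HasDerivAt (fun y : ℝ => y ^ (-γ) + A * y - B / 2 * (y - vm) ^ 2)
          ((-γ) * y ^ (-γ - 1) + A * 1 - B / 2 * (2 * (y - vm) ^ 1 * 1)) y :=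
        (h1.add ((hasDerivAt_id y).const_mul A)).sub
          ((((hasDerivAt_id y).sub_const vm).pow 2).const_mul (B / 2))
      have heq : (-γ) * y ^ (-γ - 1) + A * 1 - B / 2 * (2 * (y - vm) ^ 1 * 1)
          = (-γ) * y ^ (-γ - 1) + A - B * (y - vm) := by ring
      rw [heq] at h2
      exact h2.hasDerivWithinAt
    · intro y hy
      rw [Real.norm_eq_abs]
      exact step2 y ⟨ha.trans hy.1, hy.2⟩
  have hba : (0:ℝ) ≤ b - a := by linarith
  rw [Real.norm_eq_abs, Real.norm_eq_abs, abs_of_nonneg hba] at key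
  have heq2 : (a ^ (-γ) - b ^ (-γ)) - (b - a) * (A - B * ((a + b - 2 * vm) / 2))
      = -((fun y : ℝ => y ^ (-γ) + A * y - B / 2 * (y - vm) ^ 2) b
        - (fun y : ℝ => y ^ (-γ) + A * y - B / 2 * (y - vm) ^ 2) a) := by
    simp only
    ring
  rw [heq2, abs_neg]
  exact key

open Real in
lemma stmt16_alg (A B K h M1 M2 Ms σm σs m1 m2 : ℝ)
    (hA : 0 < A) (hB : 0 < B) (hK : 0 < K) (hh : 0 < h) (hh1 : h ≤ 1)
    (hm1 : 0 ≤ m1) (hm2 : m2 = m1 + h / 2) (hm2h : m2 ≤ h)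
    (e1 : |M1 - (A - B * m1)| ≤ K * h ^ 2)
    (e2 : |M2 - (A - B * m2)| ≤ K * h ^ 2)
    (e3 : |Ms - (A - B * (h / 2))| ≤ K * h ^ 2)
    (hsmall : B * (h / 2) + K * h ^ 2 ≤ A / 4)
    (hσm : σm = Real.sqrt A) (hσs : σs = Real.sqrt Ms) :
    |σs * (M1 - M2) / (M1 * M2) - Ms * h * B / (2 * σm * A ^ 2)|
      ≤ (16 * σm * K / A ^ 2 + 44 * B * (B / 2 + K) / (A ^ 2 * σm)) * h ^ 2 := by
  rw [abs_le] at e1 e2 e3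
  obtain ⟨e1l, e1r⟩ := e1
  obtain ⟨e2l, e2r⟩ := e2
  obtain ⟨e3l, e3r⟩ := e3
  set ε : ℝ := B * (h / 2) + K * h ^ 2 with hε
  have hεpos : 0 < ε := by positivity
  have pK : K * h ^ 2 ≤ K * h := by nlinarith [mul_nonneg hK.le hh.le]
  have hεsplit : (B / 2 + K) * h = B * (h / 2) + K * h := by ring
  have hεh : ε ≤ (B / 2 + K) * h := by rw [hε, hεsplit]; linarith
  have p1 : B * m1 ≤ B * h := mul_le_mul_of_nonneg_left (by linarith) hB.le
  have p1' : (0:ℝ) ≤ B * m1 := by positivity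
  have p2 : B * m2 ≤ B * h := mul_le_mul_of_nonneg_left hm2h hB.le
  have hm2nn : (0:ℝ) ≤ m2 := by linarith
  have p2' : (0:ℝ) ≤ B * m2 := mul_nonneg hB.le hm2nn
  have pBh : (0:ℝ) ≤ B * h := by positivity
  have pBh2 : (0:ℝ) ≤ B * (h/2) := by positivity
  have pBhalf : B * h = 2 * (B * (h / 2)) := by ring
  -- two-sided bounds
  have hM1l : A / 2 ≤ M1 := by linarith
  have hM1u : M1 ≤ 3 * A / 2 := by linarith
  have hM2l : A / 2 ≤ M2 := by linarith
  have hM2u : M2 ≤ 3 * A / 2 := by linarith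
  have hMsl : A / 2 ≤ Ms := by linarith
  have hMsu : Ms ≤ 3 * A / 2 := by linarith
  have hM1pos : 0 < M1 := by linarith
  have hM2pos : 0 < M2 := by linarith
  have hMspos : 0 < Ms := by linarith
  have hσmpos : 0 < σm := hσm ▸ Real.sqrt_pos.mpr hA
  have hσspos : 0 < σs := hσs ▸ Real.sqrt_pos.mpr hMspos
  have hσm2 : σm ^ 2 = A := by rw [hσm]; exact Real.sq_sqrt hA.le
  have hσs2 : σs ^ 2 = Ms := by rw [hσs]; exact Real.sq_sqrt hMspos.le
  have hσsle : σs ≤ 2 * σm := by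
    rw [hσs, hσm]
    calc Real.sqrt Ms ≤ Real.sqrt (4 * A) := Real.sqrt_le_sqrt (by linarith)
      _ = 2 * Real.sqrt A := by
          rw [show (4:ℝ) * A = 2 ^ 2 * A by norm_num, Real.sqrt_mul (by positivity) A,
            Real.sqrt_sq (by norm_num : (0:ℝ) ≤ 2)]
  -- |σs - σm| ≤ ε / σm
  have habsMsA : |Ms - A| ≤ ε := by rw [abs_le, hε]; constructor <;> linarith
  have habsd : |σs - σm| * (σs + σm) = |Ms - A| := by
    rw [← abs_of_pos (show (0:ℝ) < σs + σm by linarith), ← abs_mul]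
    congr 1
    linear_combination hσs2 - hσm2
  have hdif : |σs - σm| ≤ ε / σm := by
    rw [le_div_iff₀ hσmpos]
    calc |σs - σm| * σm ≤ |σs - σm| * (σs + σm) :=
          mul_le_mul_of_nonneg_left (by linarith) (abs_nonneg _)
      _ = |Ms - A| := habsd
      _ ≤ ε := habsMsA
  -- E bound
  have hBm : B * m2 = B * m1 + B * (h / 2) := by rw [hm2]; ring
  have hE : |M1 - M2 - B * (h / 2)| ≤ 2 * (K * h ^ 2) := by
    rw [abs_le]; constructor <;> linarith
  -- |M1 - A| ≤ 2ε etc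
  have habs1 : |A - M1| ≤ 2 * ε := by rw [abs_le, hε]; constructor <;> linarith
  have habs2 : |A - M2| ≤ 2 * ε := by rw [abs_le, hε]; constructor <;> linarith
  -- decomposition
  have hdec : σs * (M1 - M2) / (M1 * M2) - Ms * h * B / (2 * σm * A ^ 2)
      = σs * (M1 - M2 - B * (h / 2)) / (M1 * M2)
        + (B * (h / 2)) * ((σs * σm * A ^ 2 - Ms * (M1 * M2)) / ((M1 * M2) * (σm * A ^ 2))) := by
    field_simp
    ring
  have hM1M2 : A ^ 2 / 4 ≤ M1 * M2 := by
    have h4 : A / 2 * (A / 2) ≤ M1 * M2 :=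
      mul_le_mul hM1l hM2l (by positivity) (by linarith)
    have h5 : A / 2 * (A / 2) = A ^ 2 / 4 := by ring
    linarith
  have hM1M2pos : 0 < M1 * M2 := mul_pos hM1pos hM2pos
  -- term 1
  have t1 : |σs * (M1 - M2 - B * (h / 2)) / (M1 * M2)| ≤ 16 * σm * K / A ^ 2 * h ^ 2 := by
    rw [abs_div, abs_of_pos hM1M2pos, abs_mul, abs_of_pos hσspos]
    have hnum : σs * |M1 - M2 - B * (h / 2)| ≤ 2 * σm * (2 * (K * h ^ 2)) :=
      mul_le_mul hσsle hE (abs_nonneg _) (by positivity)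
    calc σs * |M1 - M2 - B * (h / 2)| / (M1 * M2)
        ≤ 2 * σm * (2 * (K * h ^ 2)) / (A ^ 2 / 4) :=
          div_le_div₀ (by positivity) hnum (by positivity) hM1M2
      _ = 16 * σm * K / A ^ 2 * h ^ 2 := by field_simp; ring
  -- term 2
  have hN : σs * σm * A ^ 2 - Ms * (M1 * M2)
      = σs * ((σm - σs) * A ^ 2 + σs * (A ^ 2 - M1 * M2)) := by
    linear_combination (M1 * M2) * hσs2
  have hAM : |A ^ 2 - M1 * M2| ≤ 5 * A * ε := by
    have hsplit : A ^ 2 - M1 * M2 = A * (A - M1) + M1 * (A - M2) := by ring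
    rw [hsplit]
    calc |A * (A - M1) + M1 * (A - M2)| ≤ |A * (A - M1)| + |M1 * (A - M2)| := abs_add_le _ _
      _ = A * |A - M1| + M1 * |A - M2| := by
          rw [abs_mul, abs_mul, abs_of_pos hA, abs_of_pos hM1pos]
      _ ≤ A * (2 * ε) + (3 * A / 2) * (2 * ε) := by
          apply add_le_add (mul_le_mul_of_nonneg_left habs1 hA.le)
          apply mul_le_mul hM1u habs2 (abs_nonneg _) (by positivity)
      _ = 5 * A * ε := by ring
  have hNb : |σs * σm * A ^ 2 - Ms * (M1 * M2)| ≤ 22 * A ^ 2 * ε := by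
    rw [hN, abs_mul, abs_of_pos hσspos]
    have hinner : |(σm - σs) * A ^ 2 + σs * (A ^ 2 - M1 * M2)|
        ≤ (ε / σm) * A ^ 2 + 2 * σm * (5 * A * ε) := by
      calc |(σm - σs) * A ^ 2 + σs * (A ^ 2 - M1 * M2)|
          ≤ |(σm - σs) * A ^ 2| + |σs * (A ^ 2 - M1 * M2)| := abs_add_le _ _
        _ = |σm - σs| * A ^ 2 + σs * |A ^ 2 - M1 * M2| := by
            rw [abs_mul, abs_mul, abs_of_pos hσspos, abs_of_pos (by positivity : (0:ℝ) < A ^ 2)]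
        _ ≤ (ε / σm) * A ^ 2 + 2 * σm * (5 * A * ε) := by
            apply add_le_add
            · exact mul_le_mul_of_nonneg_right (abs_sub_comm σm σs ▸ hdif) (by positivity)
            · exact mul_le_mul hσsle hAM (abs_nonneg _) (by positivity)
    calc σs * |(σm - σs) * A ^ 2 + σs * (A ^ 2 - M1 * M2)|
        ≤ 2 * σm * ((ε / σm) * A ^ 2 + 2 * σm * (5 * A * ε)) :=
          mul_le_mul hσsle hinner (abs_nonneg _) (by positivity)
      _ = 22 * A ^ 2 * ε := by
          field_simp
          linear_combination 20 * hσm2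
  have hden2pos : 0 < (M1 * M2) * (σm * A ^ 2) := by positivity
  have hden2 : (A ^ 2 / 4) * (σm * A ^ 2) ≤ (M1 * M2) * (σm * A ^ 2) :=
    mul_le_mul_of_nonneg_right hM1M2 (by positivity)
  have t2 : |(B * (h / 2)) * ((σs * σm * A ^ 2 - Ms * (M1 * M2)) / ((M1 * M2) * (σm * A ^ 2)))|
      ≤ 44 * B * (B / 2 + K) / (A ^ 2 * σm) * h ^ 2 := by
    rw [abs_mul, abs_of_pos (by positivity : (0:ℝ) < B * (h / 2)), abs_div,
      abs_of_pos hden2pos]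
    calc B * (h / 2) * (|σs * σm * A ^ 2 - Ms * (M1 * M2)| / ((M1 * M2) * (σm * A ^ 2)))
        ≤ B * (h / 2) * ((22 * A ^ 2 * ε) / ((A ^ 2 / 4) * (σm * A ^ 2))) := by
          apply mul_le_mul_of_nonneg_left _ pBh2
          exact div_le_div₀ (by positivity) hNb (by positivity) hden2
      _ = 44 * B / (A ^ 2 * σm) * (ε * h) := by field_simp; ring
      _ ≤ 44 * B / (A ^ 2 * σm) * ((B / 2 + K) * h * h) := by
          apply mul_le_mul_of_nonneg_left _ (by positivity)
          calc ε * h ≤ (B / 2 + K) * h * h := mul_le_mul_of_nonneg_right hεh hh.le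
            _ = (B / 2 + K) * h * h := by ring
      _ = 44 * B * (B / 2 + K) / (A ^ 2 * σm) * h ^ 2 := by field_simp
  rw [hdec]
  calc |σs * (M1 - M2 - B * (h / 2)) / (M1 * M2)
        + (B * (h / 2)) * ((σs * σm * A ^ 2 - Ms * (M1 * M2)) / ((M1 * M2) * (σm * A ^ 2)))|
      ≤ |σs * (M1 - M2 - B * (h / 2)) / (M1 * M2)|
        + |(B * (h / 2)) * ((σs * σm * A ^ 2 - Ms * (M1 * M2)) / ((M1 * M2) * (σm * A ^ 2)))| :=
        abs_add_le _ _
    _ ≤ 16 * σm * K / A ^ 2 * h ^ 2 + 44 * B * (B / 2 + K) / (A ^ 2 * σm) * h ^ 2 :=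
        add_le_add t1 t2
    _ = (16 * σm * K / A ^ 2 + 44 * B * (B / 2 + K) / (A ^ 2 * σm)) * h ^ 2 := by ring

/- STATEMENT 16: Fix γ > 1 and v₋ > 0 (denoted vm), and set σ₋ = √(γ v₋^(−γ−1))
(denoted σm). There are C > 0 and δ₀ > 0 such that for every v₊ > v₋ (denoted vp)
with 0 < δ := p(v₋) − p(v₊) ≤ δ₀, setting σ* = √((p(v₋) − p(v₊))/(v₊ − v₋))
(denoted σs), for every v with v₋ < v < v₊,
|(δ/(σ*(v₊ − v₋)))·((v − v₋)/(p(v) − p(v₋)) + (v − v₊)/(p(v₊) − p(v)))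
    − δ·p''(v₋)/(2σ₋(p'(v₋))²)| ≤ Cδ²,
where p(v) = v^(−γ), p'(v) = −γ v^(−γ−1), p''(v) = γ(γ+1) v^(−γ−2). -/
open Real Set in
theorem stmt16 (γ vm σm : ℝ) (hγ : 1 < γ) (hvm : 0 < vm)
    (hσm : σm = Real.sqrt (γ * vm ^ (-γ - 1))) :
    ∃ C > (0:ℝ), ∃ δ₀ > (0:ℝ), ∀ vp : ℝ, vm < vp →
      ∀ δ : ℝ, δ = vm ^ (-γ) - vp ^ (-γ) → 0 < δ → δ ≤ δ₀ →
        ∀ σs : ℝ, σs = Real.sqrt ((vm ^ (-γ) - vp ^ (-γ)) / (vp - vm)) →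
          ∀ v : ℝ, vm < v → v < vp →
            |δ / (σs * (vp - vm)) *
                ((v - vm) / (v ^ (-γ) - vm ^ (-γ)) + (v - vp) / (vp ^ (-γ) - v ^ (-γ))) -
              δ * (γ * (γ + 1) * vm ^ (-γ - 2)) /
                (2 * σm * (-(γ * vm ^ (-γ - 1))) ^ 2)| ≤ C * δ ^ 2 := by
  have hγ0 : (0:ℝ) < γ := lt_trans one_pos hγ
  set A := γ * vm ^ (-γ - 1) with hAdef
  set B := γ * (γ + 1) * vm ^ (-γ - 2) with hBdef
  set K := γ * (γ + 1) * (γ + 2) * vm ^ (-γ - 3) with hKdef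
  have hA : 0 < A := by rw [hAdef]; positivity
  have hB : 0 < B := by rw [hBdef]; positivity
  have hK : 0 < K := by rw [hKdef]; positivity
  clear_value A B K
  have hσmpos : 0 < σm := hσm ▸ Real.sqrt_pos.mpr hA
  set C0 := 16 * σm * K / A ^ 2 + 44 * B * (B / 2 + K) / (A ^ 2 * σm) with hC0
  have hC0pos : 0 < C0 := by
    rw [hC0]
    have h1 : 0 < 16 * σm * K / A ^ 2 :=
      div_pos (mul_pos (mul_pos (by norm_num) hσmpos) hK) (by positivity)
    have h2 : 0 < 44 * B * (B / 2 + K) / (A ^ 2 * σm) :=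
      div_pos (mul_pos (mul_pos (by norm_num) hB) (by positivity))
        (mul_pos (by positivity) hσmpos)
    linarith
  clear_value C0
  set h1 := min 1 (A / (2 * B + 4 * K)) with hh1def
  have hh1pos : 0 < h1 := lt_min one_pos (div_pos hA (by positivity))
  clear_value h1
  set δ₀ := vm ^ (-γ) - (vm + h1) ^ (-γ) with hδ₀def
  clear_value δ₀
  have hδ₀pos : 0 < δ₀ := by
    rw [hδ₀def]
    have := Real.rpow_lt_rpow_of_neg hvm (by linarith : vm < vm + h1) (by linarith : -γ < 0)
    linarith
  refine ⟨4 * C0 / A ^ 2, div_pos (by linarith) (by positivity), δ₀, hδ₀pos, ?_⟩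
  intro vp hvp δ hδdef hδpos hδle σs hσs v hv1 hv2
  have hh : 0 < vp - vm := sub_pos.mpr hvp
  set h := vp - vm with hhdef
  clear_value h
  have hvv : 0 < v - vm := sub_pos.mpr hv1
  have hpv : 0 < vp - v := sub_pos.mpr hv2
  -- h ≤ h1
  have hhh1 : h ≤ h1 := by
    by_contra hcon
    push_neg at hcon
    have hlt : (vp:ℝ) ^ (-γ) < (vm + h1) ^ (-γ) :=
      Real.rpow_lt_rpow_of_neg (by linarith) (by rw [hhdef] at hcon; linarith)
        (by linarith : -γ < 0)
    rw [hδ₀def] at hδle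
    rw [hδdef] at hδle
    linarith
  have hhle1 : h ≤ 1 := le_trans hhh1 (by rw [hh1def]; exact min_le_left _ _)
  have hhleA : h ≤ A / (2 * B + 4 * K) :=
    le_trans hhh1 (by rw [hh1def]; exact min_le_right _ _)
  have hsmall : B * (h / 2) + K * h ^ 2 ≤ A / 4 := by
    have h2 : K * h ^ 2 ≤ K * h := by
      have h2a := mul_le_mul_of_nonneg_left hhle1 (mul_pos hK hh).le
      calc K * h ^ 2 = K * h * h := by ring
        _ ≤ K * h * 1 := h2a
        _ = K * h := mul_one _
    have h4 : (B / 2 + K) * h ≤ (B / 2 + K) * (A / (2 * B + 4 * K)) :=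
      mul_le_mul_of_nonneg_left hhleA (by positivity)
    have h5 : (B / 2 + K) * (A / (2 * B + 4 * K)) = A / 4 := by
      field_simp
      ring
    calc B * (h / 2) + K * h ^ 2 ≤ B * (h / 2) + K * h := by linarith
      _ = (B / 2 + K) * h := by ring
      _ ≤ (B / 2 + K) * (A / (2 * B + 4 * K)) := h4
      _ = A / 4 := h5
  -- the averaged slopes
  set M1 := (vm ^ (-γ) - v ^ (-γ)) / (v - vm) with hM1def
  set M2 := (v ^ (-γ) - vp ^ (-γ)) / (vp - v) with hM2def
  set Ms := δ / h with hMsdef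
  set m1 := (v - vm) / 2 with hm1def
  set m2 := (v + vp - 2 * vm) / 2 with hm2def
  clear_value M1 M2 Ms m1 m2
  have hM1mul : M1 * (v - vm) = vm ^ (-γ) - v ^ (-γ) := by
    rw [hM1def, div_mul_cancel₀ _ hvv.ne']
  have hM2mul : M2 * (vp - v) = v ^ (-γ) - vp ^ (-γ) := by
    rw [hM2def, div_mul_cancel₀ _ hpv.ne']
  have hδh : δ = Ms * h := by rw [hMsdef, div_mul_cancel₀ _ hh.ne']
  have hsq : (v - vm) ^ 2 ≤ h ^ 2 :=
    pow_le_pow_left₀ hvv.le (by rw [hhdef]; linarith) 2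
  have e1 : |M1 - (A - B * m1)| ≤ K * h ^ 2 := by
    have k1 := stmt16_KL γ vm hγ hvm vm v le_rfl hv1.le
    rw [← hAdef, ← hBdef, ← hKdef] at k1
    have heq : M1 - (A - B * m1)
        = ((vm ^ (-γ) - v ^ (-γ)) - (v - vm) * (A - B * ((vm + v - 2 * vm) / 2))) / (v - vm) := by
      rw [eq_div_iff hvv.ne']
      linear_combination hM1mul + (B * (v - vm)) * hm1def
    rw [heq, abs_div, abs_of_pos hvv, div_le_iff₀ hvv]
    calc |(vm ^ (-γ) - v ^ (-γ)) - (v - vm) * (A - B * ((vm + v - 2 * vm) / 2))|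
        ≤ K * (v - vm) ^ 2 * (v - vm) := k1
      _ ≤ K * h ^ 2 * (v - vm) :=
          mul_le_mul_of_nonneg_right (mul_le_mul_of_nonneg_left hsq hK.le) hvv.le
  have e2 : |M2 - (A - B * m2)| ≤ K * h ^ 2 := by
    have k2 := stmt16_KL γ vm hγ hvm v vp hv1.le hv2.le
    rw [← hAdef, ← hBdef, ← hKdef] at k2
    have heq : M2 - (A - B * m2)
        = ((v ^ (-γ) - vp ^ (-γ)) - (vp - v) * (A - B * ((v + vp - 2 * vm) / 2))) / (vp - v) := by
      rw [eq_div_iff hpv.ne']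
      linear_combination hM2mul + (B * (vp - v)) * hm2def
    rw [heq, abs_div, abs_of_pos hpv, div_le_iff₀ hpv]
    calc |(v ^ (-γ) - vp ^ (-γ)) - (vp - v) * (A - B * ((v + vp - 2 * vm) / 2))|
        ≤ K * (vp - vm) ^ 2 * (vp - v) := k2
      _ = K * h ^ 2 * (vp - v) := by rw [hhdef]
  have e3 : |Ms - (A - B * (h / 2))| ≤ K * h ^ 2 := by
    have k3 := stmt16_KL γ vm hγ hvm vm vp le_rfl (by linarith)
    rw [← hAdef, ← hBdef, ← hKdef] at k3
    have heq : Ms - (A - B * (h / 2))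
        = ((vm ^ (-γ) - vp ^ (-γ)) - (vp - vm) * (A - B * ((vm + vp - 2 * vm) / 2))) / (vp - vm) := by
      have hpvm : (0:ℝ) < vp - vm := hhdef ▸ hh
      rw [eq_div_iff hpvm.ne']
      linear_combination (B * (vp - vm) / 2 - Ms) * hhdef - hδh + hδdef
    have hpvm : (0:ℝ) < vp - vm := hhdef ▸ hh
    rw [heq, abs_div, abs_of_pos hpvm, div_le_iff₀ hpvm]
    calc |(vm ^ (-γ) - vp ^ (-γ)) - (vp - vm) * (A - B * ((vm + vp - 2 * vm) / 2))|
        ≤ K * (vp - vm) ^ 2 * (vp - vm) := k3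
      _ = K * h ^ 2 * (vp - vm) := by rw [hhdef]
  have hMspos : 0 < Ms := hMsdef ▸ div_pos hδpos hh
  have hσs' : σs = Real.sqrt Ms := by rw [hσs, hMsdef, hδdef, hhdef]
  have hσspos : 0 < σs := hσs' ▸ Real.sqrt_pos.mpr hMspos
  have hσs2 : σs ^ 2 = Ms := by rw [hσs']; exact Real.sq_sqrt hMspos.le
  have main := stmt16_alg A B K h M1 M2 Ms σm σs m1 m2 hA hB hK hh hhle1
    (by rw [hm1def]; linarith) (by rw [hm2def, hm1def, hhdef]; ring)
    (by rw [hm2def, hhdef]; linarith) e1 e2 e3 hsmall hσm hσs'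
  -- rewrite the goal expression
  have hX1pos : 0 < vm ^ (-γ) - v ^ (-γ) := by
    have := Real.rpow_lt_rpow_of_neg hvm hv1 (by linarith : -γ < 0)
    linarith
  have hX2pos : 0 < v ^ (-γ) - vp ^ (-γ) := by
    have := Real.rpow_lt_rpow_of_neg (by linarith : (0:ℝ) < v) hv2 (by linarith : -γ < 0)
    linarith
  have hM1pos : 0 < M1 := hM1def ▸ div_pos hX1pos hvv
  have hM2pos : 0 < M2 := hM2def ▸ div_pos hX2pos hpv
  have d1 : v ^ (-γ) - vm ^ (-γ) = -(M1 * (v - vm)) := by linarith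
  have d2 : vp ^ (-γ) - v ^ (-γ) = -(M2 * (vp - v)) := by linarith
  have hgoal : δ / (σs * h) *
        ((v - vm) / (v ^ (-γ) - vm ^ (-γ)) + (v - vp) / (vp ^ (-γ) - v ^ (-γ))) -
      δ * B / (2 * σm * (-A) ^ 2)
      = σs * (M1 - M2) / (M1 * M2) - Ms * h * B / (2 * σm * A ^ 2) := by
    rw [d1, d2, hδh, ← hσs2]
    field_simp [hσspos.ne', hM1pos.ne', hM2pos.ne', hσmpos.ne', hA.ne', hh.ne',
      hvv.ne', hpv.ne']
    ring
  rw [hgoal]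
  -- conclude
  have hMsge : A / 2 ≤ Ms := by
    rw [abs_le] at e3
    obtain ⟨e3l, e3r⟩ := e3
    have hKh2 : (0:ℝ) ≤ K * h ^ 2 := by positivity
    have hBh2 : (0:ℝ) ≤ B * (h / 2) := by positivity
    linarith
  have hAh : A * h ≤ 2 * δ := by
    have := mul_le_mul_of_nonneg_right hMsge hh.le
    rw [hδh]
    linarith
  have hsq2 : (A * h) ^ 2 ≤ (2 * δ) ^ 2 :=
    pow_le_pow_left₀ (by positivity) hAh 2
  rw [← hC0] at main
  calc |σs * (M1 - M2) / (M1 * M2) - Ms * h * B / (2 * σm * A ^ 2)| ≤ C0 * h ^ 2 := main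
    _ ≤ 4 * C0 / A ^ 2 * δ ^ 2 := by
        rw [← sub_nonneg]
        have hfe : 4 * C0 / A ^ 2 * δ ^ 2 - C0 * h ^ 2
            = C0 * ((2 * δ) ^ 2 - (A * h) ^ 2) / A ^ 2 := by
          field_simp [hA.ne']
          ring
        rw [hfe]
        apply div_nonneg (mul_nonneg hC0pos.le (by linarith)) (by positivity)
end
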